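/- arXiv:1904.09907 — 2 statements merged into one kernel-verified Lean document; each statement's English description precedes it below -/
import Mathlib

section
/- Suppose G ⊆ H(ω*) is an intersection of fewer than 𝔰 many open sets, where 𝔰 is the splitting number. Then G ∩ Iso(σ) ≠ ∅ if and only if G ∩ Iso(σ⁻¹) ≠ ∅. -/
open Set TopologicalSpace

noncomputable section

/-- `ω*`, the Stone–Čech remainder `βω ∖ ω`: the space of free (non-principal)
ultrafilters on `ℕ`, as a subspace of `βℕ = Ultrafilter ℕ` (whose topology is
generated by the clopen sets `A* = {u : A ∈ u}` for `A ⊆ ℕ`). -/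
abbrev NStar : Type := {u : Ultrafilter ℕ // ∀ n : ℕ, u ≠ pure n}

lemma free_map_add (u : NStar) : ∀ n : ℕ, Ultrafilter.map (· + 1) u.1 ≠ pure n := by
  intro n hn
  have h1 : (· + 1) ⁻¹' {n} ∈ u.1 := by
    have : {n} ∈ Ultrafilter.map (· + 1) u.1 := by
      rw [hn]; exact Ultrafilter.mem_pure.mpr rfl
    exact this
  have hfin : ((· + 1) ⁻¹' {n} : Set ℕ).Finite := by
    apply Set.Finite.subset (Set.finite_singleton (n - 1))
    intro x hx
    simp only [Set.mem_preimage, Set.mem_singleton_iff] at hx ⊢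
    omega
  obtain ⟨x, -, hx⟩ := Ultrafilter.eq_pure_of_finite_mem hfin h1
  exact u.2 x hx

lemma free_map_sub (u : NStar) : ∀ n : ℕ, Ultrafilter.map (· - 1) u.1 ≠ pure n := by
  intro n hn
  have h1 : (· - 1) ⁻¹' {n} ∈ u.1 := by
    have : {n} ∈ Ultrafilter.map (· - 1) u.1 := by
      rw [hn]; exact Ultrafilter.mem_pure.mpr rfl
    exact this
  have hfin : ((· - 1) ⁻¹' {n} : Set ℕ).Finite := by
    apply Set.Finite.subset (Set.toFinite {0, 1, n + 1})
    intro x hx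
    simp only [Set.mem_preimage, Set.mem_singleton_iff] at hx
    simp only [Set.mem_insert_iff, Set.mem_singleton_iff]
    omega
  obtain ⟨x, -, hx⟩ := Ultrafilter.eq_pure_of_finite_mem hfin h1
  exact u.2 x hx

lemma ucofinite (u : NStar) : (u.1 : Filter ℕ) ≤ Filter.cofinite := by
  rcases u.1.le_cofinite_or_eq_pure with h | ⟨a, ha⟩
  · exact h
  · exact absurd ha (u.2 a)

lemma left_inv_aux (u : NStar) :
    Ultrafilter.map (· - 1) (Ultrafilter.map (· + 1) u.1) = u.1 := by
  apply Ultrafilter.coe_injective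
  rw [Ultrafilter.coe_map, Ultrafilter.coe_map, Filter.map_map]
  have : ((· - 1) ∘ (· + 1) : ℕ → ℕ) = id := by funext x; simp
  rw [this, Filter.map_id]

lemma right_inv_aux (u : NStar) :
    Ultrafilter.map (· + 1) (Ultrafilter.map (· - 1) u.1) = u.1 := by
  apply Ultrafilter.coe_injective
  rw [Ultrafilter.coe_map, Ultrafilter.coe_map, Filter.map_map]
  have h1 : ((· + 1) ∘ (· - 1) : ℕ → ℕ) =ᶠ[(u.1 : Filter ℕ)] id := by
    apply ucofinite u
    have : {x : ℕ | ¬ ((· + 1) ∘ (· - 1) : ℕ → ℕ) x = id x} ⊆ {0} := by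
      intro x hx
      simp only [Function.comp_apply, id_eq, Set.mem_setOf_eq] at hx
      simp only [Set.mem_singleton_iff]
      omega
    exact Set.Finite.subset (Set.finite_singleton 0) this
  calc Filter.map ((· + 1) ∘ (· - 1)) (u.1 : Filter ℕ)
      = Filter.map id (u.1 : Filter ℕ) := Filter.map_congr h1
    _ = (u.1 : Filter ℕ) := Filter.map_id

lemma continuous_umap (m : ℕ → ℕ) :
    Continuous (Ultrafilter.map m : Ultrafilter ℕ → Ultrafilter ℕ) := by
  rw [ultrafilterBasis_is_basis.continuous_iff]
  rintro _ ⟨s, rfl⟩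
  exact ultrafilter_isOpen_basic (m ⁻¹' s)

/-- The shift map on `ω*`: it sends `u` to the ultrafilter generated by
`{A + 1 : A ∈ u}`, i.e. the image ultrafilter of `u` under `n ↦ n + 1`. -/
def shiftF (u : NStar) : NStar := ⟨Ultrafilter.map (· + 1) u.1, free_map_add u⟩

/-- The inverse of the shift map on `ω*`, induced by the predecessor function. -/
def shiftInvF (u : NStar) : NStar := ⟨Ultrafilter.map (· - 1) u.1, free_map_sub u⟩

/-- The shift map `σ : ω* → ω*` as a self-homeomorphism of `ω*`. -/
def sigmaShift : NStar ≃ₜ NStar :=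
  { toFun := shiftF
    invFun := shiftInvF
    left_inv := fun u => Subtype.ext (left_inv_aux u)
    right_inv := fun u => Subtype.ext (right_inv_aux u)
    continuous_toFun :=
      Continuous.subtype_mk ((continuous_umap (· + 1)).comp continuous_subtype_val) _
    continuous_invFun :=
      Continuous.subtype_mk ((continuous_umap (· - 1)).comp continuous_subtype_val) _ }

/-- `f` and `g` are isomorphic dynamical systems on `ω*`: there is `h ∈ H(ω*)`
with `h ∘ f = g ∘ h`. -/
def Isomorphic (f g : NStar ≃ₜ NStar) : Prop :=
  ∃ h : NStar ≃ₜ NStar, ∀ u, h (f u) = g (h u)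

/-- `Iso(σ)`: the set of members of `H(ω*)` isomorphic to the shift map `σ`. -/
def IsoSigma : Set (NStar ≃ₜ NStar) := {h | Isomorphic h sigmaShift}

/-- `Iso(σ⁻¹)`: the set of members of `H(ω*)` isomorphic to `σ⁻¹`. -/
def IsoSigmaInv : Set (NStar ≃ₜ NStar) := {h | Isomorphic h sigmaShift.symm}

/-- The compact-open topology on the group `H(X)` of self-homeomorphisms of `X`,
generated by the sets `V(K,U) = {h : h[K] ⊆ U}` for `K` compact and `U` open. -/
instance homeoCO {X : Type*} [TopologicalSpace X] : TopologicalSpace (X ≃ₜ X) :=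
  TopologicalSpace.generateFrom
    {S : Set (X ≃ₜ X) | ∃ K U : Set X, IsCompact K ∧ IsOpen U ∧
      S = {h : X ≃ₜ X | ∀ x ∈ K, h x ∈ U}}

/-- The splitting number `𝔰`: the least cardinality of a family `S` of subsets of
`ω` such that every infinite `A ⊆ ω` is split by some `D ∈ S` (both `A ∩ D` and
`A ∖ D` infinite). -/
def splittingNumber : Cardinal :=
  sInf {c : Cardinal | ∃ S : Set (Set ℕ), Cardinal.mk S = c ∧
    ∀ A : Set ℕ, A.Infinite → ∃ D ∈ S, (A ∩ D).Infinite ∧ (A \ D).Infinite}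


namespace Stmt14

abbrev H := NStar ≃ₜ NStar

lemma isOpen_pure (n : ℕ) : IsOpen ({pure n} : Set (Ultrafilter ℕ)) := by
  have h : ({pure n} : Set (Ultrafilter ℕ)) = {u | ({n} : Set ℕ) ∈ u} := by
    ext u
    simp only [Set.mem_singleton_iff, Set.mem_setOf_eq]
    constructor
    · rintro rfl; exact Ultrafilter.mem_pure.mpr rfl
    · intro hu
      obtain ⟨x, hx, hx2⟩ := Ultrafilter.eq_pure_of_finite_mem (Set.finite_singleton n) hu
      rwa [Set.mem_singleton_iff.mp hx] at hx2
  rw [h]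
  exact ultrafilter_isOpen_basic {n}

lemma isClosed_nstar : IsClosed {u : Ultrafilter ℕ | ∀ n : ℕ, u ≠ pure n} := by
  have h : {u : Ultrafilter ℕ | ∀ n : ℕ, u ≠ pure n}
      = ⋂ n : ℕ, ({pure n} : Set (Ultrafilter ℕ))ᶜ := by
    ext u; simp [Set.mem_iInter]
  rw [h]
  exact isClosed_iInter fun n => (isOpen_pure n).isClosed_compl

instance : CompactSpace NStar := isCompact_iff_compactSpace.mp isClosed_nstar.isCompact

/-- `C* ⊆ ω*` -/
def star (C : Set ℕ) : Set NStar := {u | C ∈ u.1}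

lemma isOpen_star (C : Set ℕ) : IsOpen (star C) :=
  (ultrafilter_isOpen_basic C).preimage continuous_subtype_val

lemma isClosed_star (C : Set ℕ) : IsClosed (star C) :=
  (ultrafilter_isClosed_basic C).preimage continuous_subtype_val

lemma isCompact_star (C : Set ℕ) : IsCompact (star C) := (isClosed_star C).isCompact

/-- interpolate a `C*` between a compact set and an open superset -/
lemma exists_star_between {K W : Set NStar} (hK : IsCompact K) (hW : IsOpen W) (hKW : K ⊆ W) :
    ∃ C : Set ℕ, K ⊆ star C ∧ star C ⊆ W := by
  obtain ⟨W', hW', rfl⟩ := isOpen_induced_iff.mp hW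
  -- for each u in K pick a basic set
  have key : ∀ u : NStar, u ∈ K → ∃ s : Set ℕ, u.1 ∈ {v : Ultrafilter ℕ | s ∈ v} ∧
      {v : Ultrafilter ℕ | s ∈ v} ⊆ W' := by
    intro u hu
    obtain ⟨t, ⟨s, rfl⟩, h1, h2⟩ :=
      ultrafilterBasis_is_basis.exists_subset_of_mem_open (hKW hu) hW'
    exact ⟨s, h1, h2⟩
  choose! s hs1 hs2 using key
  -- cover K by the basic sets
  have hcov : K ⊆ ⋃ u ∈ K, star (s u) := fun u hu =>
    Set.mem_biUnion hu (hs1 u hu)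
  obtain ⟨t, htK, htfin, htcov⟩ := hK.elim_finite_subcover_image
    (fun u (_ : u ∈ K) => isOpen_star (s u)) hcov
  refine ⟨⋃ u ∈ t, s u, ?_, ?_⟩
  · intro u hu
    obtain ⟨v, hv, hvs⟩ := Set.mem_iUnion₂.mp (htcov hu)
    exact (u.1.finite_biUnion_mem_iff htfin).mpr ⟨v, hv, hvs⟩
  · intro u hu
    obtain ⟨v, hv, hvs⟩ := (u.1.finite_biUnion_mem_iff htfin).mp hu
    exact hs2 v (htK hv) hvs

end Stmt14



-- Part 2: ultrafilter membership lemmas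
namespace Stmt14

/-- every infinite subset of ω belongs to some free ultrafilter -/
lemma exists_free_mem {S : Set ℕ} (hS : S.Infinite) : ∃ u : NStar, S ∈ u.1 := by
  have hne : (Filter.cofinite ⊓ Filter.principal S).NeBot :=
    hS.cofinite_inf_principal_neBot
  let u := Ultrafilter.of (Filter.cofinite ⊓ Filter.principal S)
  have hle : (u : Filter ℕ) ≤ Filter.cofinite ⊓ Filter.principal S := Ultrafilter.of_le _
  have hcof : (u : Filter ℕ) ≤ Filter.cofinite := hle.trans inf_le_left
  have hfree : ∀ n : ℕ, u ≠ pure n := by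
    intro n hn
    have h1 : ({n} : Set ℕ)ᶜ ∈ u := hcof (Set.finite_singleton n).compl_mem_cofinite
    have h2 : ({n} : Set ℕ) ∈ u := by rw [hn]; exact Ultrafilter.mem_pure.mpr rfl
    exact absurd (u.1.inter_sets h1 h2) (by simp)
  exact ⟨⟨u, hfree⟩, (hle.trans inf_le_right) (Filter.mem_principal_self S)⟩

/-- the membership criterion: a map induced by `m : ℕ → ℕ` sends `C*` into `D*`
iff all but finitely many elements of `C` are sent into `D` by `m`. -/
lemma star_maps_iff {m : ℕ → ℕ} {T : NStar → NStar}
    (hT : ∀ u : NStar, (T u).1 = Ultrafilter.map m u.1) (C D : Set ℕ) :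
    (∀ u : NStar, C ∈ u.1 → D ∈ (T u).1) ↔ (C \ m ⁻¹' D).Finite := by
  constructor
  · intro h
    by_contra hinf
    rw [← Set.not_infinite, not_not] at hinf
    obtain ⟨u, hu⟩ := exists_free_mem hinf
    have h1 : C ∈ u.1 := u.1.mem_of_superset hu Set.diff_subset
    have h2 : D ∈ (T u).1 := h u h1
    rw [hT] at h2
    have h3 : m ⁻¹' D ∈ u.1 := h2
    have h4 : (C \ m ⁻¹' D) ∩ m ⁻¹' D ∈ u.1 := u.1.inter_sets hu h3
    have : (C \ m ⁻¹' D) ∩ m ⁻¹' D = ∅ := by ext x; simp (config := {contextual := true})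
    rw [this] at h4
    exact u.1.1.empty_notMem h4
  · intro hfin u hu
    rw [hT]
    have h1 : (C \ m ⁻¹' D)ᶜ ∈ u.1 := ucofinite u hfin.compl_mem_cofinite
    have h2 : C ∩ (C \ m ⁻¹' D)ᶜ ∈ u.1 := u.1.inter_sets hu h1
    refine u.1.mem_of_superset h2 ?_
    intro x hx
    simp only [Set.mem_inter_iff, Set.mem_compl_iff, Set.mem_diff, not_and, not_not] at hx
    exact hx.2 hx.1

lemma map_comp_eq {m1 m2 : ℕ → ℕ} (u : Ultrafilter ℕ) :
    Ultrafilter.map m1 (Ultrafilter.map m2 u) = Ultrafilter.map (m1 ∘ m2) u := by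
  apply Ultrafilter.coe_injective
  rw [Ultrafilter.coe_map, Ultrafilter.coe_map, Ultrafilter.coe_map, Filter.map_map]

end Stmt14



-- Part 3: splitting number facts
namespace Stmt14

/-- diagonalization: no countable family is splitting -/
lemma exists_unsplit_countable (D : ℕ → Set ℕ) :
    ∃ A : Set ℕ, A.Infinite ∧ ∀ n, (A ∩ D n).Finite ∨ (A \ D n).Finite := by
  classical
  let X : ℕ → Set ℕ := fun n => Nat.rec Set.univ
    (fun m p => if (p ∩ D m).Infinite then p ∩ D m else p \ D m) n
  have hXs : ∀ n, X (n+1) = if (X n ∩ D n).Infinite then X n ∩ D n else X n \ D n :=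
    fun n => rfl
  have hXinf : ∀ n, (X n).Infinite := by
    intro n
    induction n with
    | zero => exact Set.infinite_univ
    | succ m ih =>
      rw [hXs]
      split
      · assumption
      · next h =>
        rw [Set.not_infinite] at h
        have heq : X m \ D m = X m \ (X m ∩ D m) := by
          ext x; simp only [Set.mem_diff, Set.mem_inter_iff]; tauto
        rw [heq]
        exact ih.diff h
  have hXsub : ∀ n, X (n+1) ⊆ X n := by
    intro n
    rw [hXs]
    split
    · exact Set.inter_subset_left
    · exact Set.diff_subset
  have hXmono : ∀ m n, m ≤ n → X n ⊆ X m := by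
    intro m n hmn
    induction n with
    | zero => have : m = 0 := Nat.le_zero.mp hmn; subst this; exact fun x h => h
    | succ k ih =>
      rcases Nat.lt_or_ge m (k+1) with h | h
      · exact (hXsub k).trans (ih (Nat.lt_succ_iff.mp h))
      · have : m = k + 1 := le_antisymm hmn h
        subst this; exact fun x h => h
  have hXdec : ∀ n, X (n+1) ⊆ D n ∨ X (n+1) ⊆ (D n)ᶜ := by
    intro n
    rw [hXs]
    split
    · exact Or.inl Set.inter_subset_right
    · exact Or.inr fun x hx => hx.2
  have hsel : ∀ n (b : ℕ), ∃ x ∈ X n, b < x := fun n b => (hXinf n).exists_gt b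
  choose f hf1 hf2 using hsel
  let b : ℕ → ℕ := fun n => Nat.rec (f 0 0) (fun m p => f (m+1) p) n
  have hb1 : ∀ n, b n ∈ X n := by
    intro n; cases n with
    | zero => exact hf1 0 0
    | succ m => exact hf1 (m+1) (b m)
  have hbmono : StrictMono b := strictMono_nat_of_lt_succ fun n => hf2 (n+1) (b n)
  refine ⟨Set.range b, Set.infinite_range_of_injective hbmono.injective, ?_⟩
  intro n
  have key : ∀ m, n + 1 ≤ m → b m ∈ X (n+1) := fun m hm => hXmono _ _ hm (hb1 m)
  rcases hXdec n with hc | hc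
  · right
    have hsub : Set.range b \ D n ⊆ b '' (Set.Iio (n+1)) := by
      rintro x ⟨⟨m, rfl⟩, hx2⟩
      rcases Nat.lt_or_ge m (n+1) with h | h
      · exact ⟨m, h, rfl⟩
      · exact absurd (hc (key m h)) hx2
    exact ((Set.finite_Iio _).image b).subset hsub
  · left
    have hsub : Set.range b ∩ D n ⊆ b '' (Set.Iio (n+1)) := by
      rintro x ⟨⟨m, rfl⟩, hx2⟩
      rcases Nat.lt_or_ge m (n+1) with h | h
      · exact ⟨m, h, rfl⟩
      · exact absurd hx2 (hc (key m h))
    exact ((Set.finite_Iio _).image b).subset hsub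

/-- some splitting family exists (e.g. all subsets), so the `sInf` is attained -/
lemma splittingNumber_mem : ∃ S : Set (Set ℕ), Cardinal.mk S = splittingNumber ∧
    ∀ A : Set ℕ, A.Infinite → ∃ D ∈ S, (A ∩ D).Infinite ∧ (A \ D).Infinite := by
  have hne : {c : Cardinal | ∃ S : Set (Set ℕ), Cardinal.mk S = c ∧
      ∀ A : Set ℕ, A.Infinite → ∃ D ∈ S, (A ∩ D).Infinite ∧ (A \ D).Infinite}.Nonempty := by
    refine ⟨Cardinal.mk (Set.univ : Set (Set ℕ)), Set.univ, rfl, ?_⟩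
    intro A hA
    -- split A by the set of its "even-indexed" elements
    refine ⟨Set.range (fun k => Nat.nth (· ∈ A) (2 * k)), Set.mem_univ _, ?_, ?_⟩
    · refine Set.infinite_of_injective_forall_mem
        (f := fun k => Nat.nth (· ∈ A) (2 * k)) ?_ ?_
      · intro i j hij
        have := (Nat.nth_strictMono (p := (· ∈ A)) hA).injective hij
        omega
      · intro k
        exact ⟨Nat.nth_mem_of_infinite hA _, ⟨k, rfl⟩⟩
    · refine Set.infinite_of_injective_forall_mem
        (f := fun k => Nat.nth (· ∈ A) (2 * k + 1)) ?_ ?_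
      · intro i j hij
        have := (Nat.nth_strictMono (p := (· ∈ A)) hA).injective hij
        omega
      · intro k
        refine ⟨Nat.nth_mem_of_infinite hA _, ?_⟩
        rintro ⟨j, hj⟩
        have := (Nat.nth_strictMono (p := (· ∈ A)) hA).injective hj
        omega
  obtain ⟨S, hS1, hS2⟩ := csInf_mem hne
  exact ⟨S, hS1, hS2⟩

lemma aleph0_lt_splittingNumber : Cardinal.aleph0 < splittingNumber := by
  obtain ⟨S, hS1, hS2⟩ := splittingNumber_mem
  rw [← hS1]
  by_contra hle
  push_neg at hle
  -- S is countable
  have hScount : S.Countable := by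
    rw [Cardinal.mk_le_aleph0_iff] at hle
    exact Set.countable_coe_iff.mp hle
  rcases S.eq_empty_or_nonempty with rfl | hSne
  · obtain ⟨D, hD, -⟩ := hS2 (Set.range (2 * ·))
      (Set.infinite_of_injective_forall_mem (fun a b h => by simpa using h) (fun k => ⟨k, rfl⟩))
    exact hD
  obtain ⟨g, hg⟩ := hScount.exists_eq_range hSne
  obtain ⟨A, hA, hAn⟩ := exists_unsplit_countable g
  obtain ⟨D, hD, h1, h2⟩ := hS2 A hA
  rw [hg] at hD
  obtain ⟨n, rfl⟩ := hD
  rcases hAn n with h | h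
  · exact h1 h
  · exact h2 h

/-- a family of fewer than `𝔰` sets is not splitting -/
lemma exists_unsplit {S : Set (Set ℕ)} (hS : Cardinal.mk S < splittingNumber) :
    ∃ A : Set ℕ, A.Infinite ∧ ∀ D ∈ S, (A ∩ D).Finite ∨ (A \ D).Finite := by
  by_contra hcon
  push_neg at hcon
  have hmem : Cardinal.mk S ∈ {c : Cardinal | ∃ S : Set (Set ℕ), Cardinal.mk S = c ∧
      ∀ A : Set ℕ, A.Infinite → ∃ D ∈ S, (A ∩ D).Infinite ∧ (A \ D).Infinite} := by
    refine ⟨S, rfl, ?_⟩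
    intro A hA
    obtain ⟨D, hD, hsplit⟩ := hcon A hA
    exact ⟨D, hD, hsplit.1, hsplit.2⟩
  exact absurd (csInf_le' hmem) (not_le.mpr hS)

end Stmt14



-- Part 4: the compact-open topology on H
namespace Stmt14

def genH : Set (Set H) :=
  {S : Set H | ∃ K U : Set NStar, IsCompact K ∧ IsOpen U ∧
      S = {h : H | ∀ x ∈ K, h x ∈ U}}

lemma topH_eq : (homeoCO : TopologicalSpace H) = TopologicalSpace.generateFrom genH := rfl

lemma basisH : TopologicalSpace.IsTopologicalBasis
    ((fun f : Set (Set H) => Set.sInter f) '' { f : Set (Set H) | f.Finite ∧ f ⊆ genH }) :=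
  TopologicalSpace.isTopologicalBasis_of_subbasis topH_eq

/-- conjugation `h ↦ k ∘ h ∘ k⁻¹` is continuous on `H` -/
lemma continuous_conj (k : H) : Continuous (fun h : H => (k.symm.trans h).trans k) := by
  rw [topH_eq]
  rw [continuous_generateFrom_iff]
  rintro S ⟨K, U, hK, hU, rfl⟩
  have : (fun h : H => (k.symm.trans h).trans k) ⁻¹' {h : H | ∀ x ∈ K, h x ∈ U}
      = {h : H | ∀ x ∈ (k.symm '' K), h x ∈ (⇑k ⁻¹' U)} := by
    ext h
    simp only [Set.mem_preimage, Set.mem_setOf_eq]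
    constructor
    · rintro hyp y ⟨x, hx, rfl⟩
      exact hyp x hx
    · intro hyp x hx
      exact hyp (k.symm x) ⟨x, hx, rfl⟩
  rw [this]
  exact TopologicalSpace.GenerateOpen.basic _
    ⟨k.symm '' K, ⇑k ⁻¹' U, hK.image k.symm.continuous, hU.preimage k.continuous, rfl⟩

/-- inversion `h ↦ h⁻¹` is continuous on `H` -/
lemma continuous_inv : Continuous (fun h : H => h.symm) := by
  rw [topH_eq, continuous_generateFrom_iff]
  rintro S ⟨K, U, hK, hU, rfl⟩
  have : (fun h : H => h.symm) ⁻¹' {h : H | ∀ x ∈ K, h x ∈ U}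
      = {h : H | ∀ x ∈ Uᶜ, h x ∈ Kᶜ} := by
    ext h
    simp only [Set.mem_preimage, Set.mem_setOf_eq, Set.mem_compl_iff]
    constructor
    · intro hyp y hy hyK
      exact hy (by simpa using hyp (h y) hyK)
    · intro hyp x hx
      by_contra hcon
      exact hyp (h.symm x) hcon (by simpa using hx)
  rw [this]
  exact TopologicalSpace.GenerateOpen.basic _
    ⟨Uᶜ, Kᶜ, hU.isClosed_compl.isCompact, hK.isClosed.isOpen_compl, rfl⟩

lemma conj_conj (k : H) (h : H) : (k.trans ((k.symm.trans h).trans k)).trans k.symm = h := by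
  ext x
  simp

lemma conj_conj' (k : H) (h : H) : (k.symm.trans ((k.trans h).trans k.symm)).trans k = h := by
  ext x
  simp

/-- image of an open set under conjugation is open -/
lemma isOpen_conj_image {V : Set H} (hV : IsOpen V) (k : H) :
    IsOpen ((fun h : H => (k.symm.trans h).trans k) '' V) := by
  have : (fun h : H => (k.symm.trans h).trans k) '' V
      = (fun h : H => (k.trans h).trans k.symm) ⁻¹' V := by
    ext h
    constructor
    · rintro ⟨g, hg, rfl⟩
      simpa [conj_conj] using hg
    · intro hyp
      exact ⟨(k.trans h).trans k.symm, hyp, conj_conj' k h⟩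
  rw [this]
  exact (continuous_conj k.symm).isOpen_preimage V hV

/-- image of an open set under inversion is open -/
lemma isOpen_inv_image {V : Set H} (hV : IsOpen V) :
    IsOpen ((fun h : H => h.symm) '' V) := by
  have : (fun h : H => h.symm) '' V = (fun h : H => h.symm) ⁻¹' V := by
    ext h
    constructor
    · rintro ⟨g, hg, rfl⟩
      simpa using hg
    · intro hyp
      exact ⟨h.symm, hyp, by simp⟩
  rw [this]
  exact continuous_inv.isOpen_preimage V hV

end Stmt14



-- Part 5: interval-reversal machinery
namespace Stmt14

/-- index of the block `[a n, a (n+1))` containing `k` -/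
def blk (a : ℕ → ℕ) (k : ℕ) : ℕ := Nat.findGreatest (fun n => a n ≤ k) k

/-- reversal of each block -/
def rmap (a : ℕ → ℕ) (k : ℕ) : ℕ := a (blk a k) + a (blk a k + 1) - 1 - k

/-- the conjugated inverse-shift map on `ℕ` -/
def gmap (a : ℕ → ℕ) (k : ℕ) : ℕ := rmap a (rmap a k - 1)

section Blocks

variable {a : ℕ → ℕ} (ha0 : a 0 = 0) (hm : StrictMono a)

include ha0 in
lemma blk_le (k : ℕ) : a (blk a k) ≤ k := by
  have h := Nat.findGreatest_spec (P := fun n => a n ≤ k) (Nat.zero_le k)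
    (by simp [ha0])
  exact h

set_option linter.unusedSectionVars false

include ha0 hm

lemma blk_lt (k : ℕ) : k < a (blk a k + 1) := by
  by_contra hcon
  push_neg at hcon
  have h1 : blk a k + 1 ≤ a (blk a k + 1) := hm.le_apply
  have h2 : blk a k + 1 ≤ blk a k :=
    Nat.le_findGreatest (h1.trans hcon) hcon
  omega

lemma blk_eq {n k : ℕ} (h1 : a n ≤ k) (h2 : k < a (n + 1)) : blk a k = n := by
  have hle : n ≤ blk a k := Nat.le_findGreatest (hm.le_apply.trans h1) h1
  have hge : blk a k ≤ n := by
    by_contra hcon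
    push_neg at hcon
    have : a (n + 1) ≤ a (blk a k) := hm.monotone hcon
    have := blk_le ha0 (a := a) k
    omega
  omega

lemma rmap_eq {n k : ℕ} (h1 : a n ≤ k) (h2 : k < a (n + 1)) :
    rmap a k = a n + a (n + 1) - 1 - k := by
  rw [rmap, blk_eq ha0 hm h1 h2]

lemma rmap_mem {n k : ℕ} (h1 : a n ≤ k) (h2 : k < a (n + 1)) :
    a n ≤ rmap a k ∧ rmap a k < a (n + 1) := by
  rw [rmap_eq ha0 hm h1 h2]
  have : a n < a (n + 1) := hm (Nat.lt_succ_self n)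
  omega

lemma rmap_invol (k : ℕ) : rmap a (rmap a k) = k := by
  have h1 := blk_le ha0 (a := a) k
  have h2 := blk_lt ha0 hm (a := a) k
  have h3 := rmap_mem ha0 hm h1 h2
  have h4 := rmap_eq ha0 hm h1 h2
  rw [rmap_eq ha0 hm h3.1 h3.2, h4]
  have : a (blk a k) < a (blk a k + 1) := hm (Nat.lt_succ_self _)
  omega

lemma gmap_mid {n k : ℕ} (h1 : a n ≤ k) (h2 : k + 1 < a (n + 1)) :
    gmap a k = k + 1 := by
  have hr := rmap_eq ha0 hm h1 (by omega)
  have hlt : a n < a (n + 1) := hm (Nat.lt_succ_self n)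
  have hb1 : a n ≤ rmap a k - 1 := by omega
  have hb2 : rmap a k - 1 < a (n + 1) := by omega
  rw [gmap, rmap_eq ha0 hm hb1 hb2]
  omega

lemma gmap_top {n : ℕ} (hn : 1 ≤ n) : gmap a (a (n + 1) - 1) = a (n - 1) := by
  have hlt : a n < a (n + 1) := hm (Nat.lt_succ_self n)
  have hlt' : a (n - 1) < a n := by
    have : n - 1 < n := by omega
    exact hm this
  have h0 : 0 < a n := by
    have : a 0 < a n := hm (by omega)
    omega
  have hr : rmap a (a (n + 1) - 1) = a n := by
    rw [rmap_eq ha0 hm (n := n) (k := a (n + 1) - 1) (by omega) (by omega)]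
    omega
  have hn1 : n - 1 + 1 = n := by omega
  rw [gmap, hr, rmap_eq ha0 hm (n := n - 1) (by omega) (by rw [hn1]; omega)]
  rw [hn1]
  omega

lemma gmap_cases (k : ℕ) : gmap a k = k + 1 ∨ ∃ n, k = a (n + 1) - 1 := by
  have h1 := blk_le ha0 (a := a) k
  have h2 := blk_lt ha0 hm (a := a) k
  rcases Nat.lt_or_ge (k + 1) (a (blk a k + 1)) with h | h
  · exact Or.inl (gmap_mid ha0 hm h1 h)
  · exact Or.inr ⟨blk a k, by omega⟩

end Blocks

end Stmt14



-- Part 6a: homeomorphisms of ω* induced by involutions of ω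
namespace Stmt14

lemma free_map_invol {m : ℕ → ℕ} (hinv : ∀ k, m (m k) = k) (u : NStar) :
    ∀ n : ℕ, Ultrafilter.map m u.1 ≠ pure n := by
  intro n hn
  have h1 : m ⁻¹' {n} ∈ u.1 := by
    have : {n} ∈ Ultrafilter.map m u.1 := by
      rw [hn]; exact Ultrafilter.mem_pure.mpr rfl
    exact this
  have hfin : (m ⁻¹' {n} : Set ℕ).Finite := by
    apply Set.Finite.subset (Set.finite_singleton (m n))
    intro x hx
    simp only [Set.mem_preimage, Set.mem_singleton_iff] at hx ⊢
    rw [← hx, hinv]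
  obtain ⟨x, -, hx⟩ := Ultrafilter.eq_pure_of_finite_mem hfin h1
  exact u.2 x hx

lemma map_invol_invol {m : ℕ → ℕ} (hinv : ∀ k, m (m k) = k) (u : Ultrafilter ℕ) :
    Ultrafilter.map m (Ultrafilter.map m u) = u := by
  rw [map_comp_eq]
  have h : m ∘ m = id := funext hinv
  rw [h]
  apply Ultrafilter.coe_injective
  rw [Ultrafilter.coe_map, Filter.map_id]

/-- the self-homeomorphism of `ω*` induced by an involution of `ω` -/
def involHomeo (m : ℕ → ℕ) (hinv : ∀ k, m (m k) = k) : H :=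
  { toFun := fun u => ⟨Ultrafilter.map m u.1, free_map_invol hinv u⟩
    invFun := fun u => ⟨Ultrafilter.map m u.1, free_map_invol hinv u⟩
    left_inv := fun u => Subtype.ext (map_invol_invol hinv u.1)
    right_inv := fun u => Subtype.ext (map_invol_invol hinv u.1)
    continuous_toFun :=
      Continuous.subtype_mk ((continuous_umap m).comp continuous_subtype_val) _
    continuous_invFun :=
      Continuous.subtype_mk ((continuous_umap m).comp continuous_subtype_val) _ }

section Tau

variable {a : ℕ → ℕ} (ha0 : a 0 = 0) (hm : StrictMono a)

/-- the block-reversal homeomorphism `R_a` -/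
def Rhomeo : H := involHomeo (rmap a) (rmap_invol ha0 hm)

/-- `τ_a = R_a ∘ σ⁻¹ ∘ R_a`, a conjugate of `σ⁻¹` close to `σ` -/
def tauHomeo : H := (Rhomeo ha0 hm).trans (sigmaShift.symm.trans (Rhomeo ha0 hm))

lemma tau_coe (u : NStar) :
    ((tauHomeo ha0 hm) u).1 = Ultrafilter.map (gmap a) u.1 := by
  show Ultrafilter.map (rmap a) (Ultrafilter.map (· - 1) (Ultrafilter.map (rmap a) u.1))
      = Ultrafilter.map (gmap a) u.1
  rw [map_comp_eq, map_comp_eq]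
  rfl

lemma tau_mem_isoInv : tauHomeo ha0 hm ∈ IsoSigmaInv := by
  refine ⟨Rhomeo ha0 hm, fun u => ?_⟩
  show (Rhomeo ha0 hm) ((Rhomeo ha0 hm) (sigmaShift.symm ((Rhomeo ha0 hm) u)))
      = sigmaShift.symm ((Rhomeo ha0 hm) u)
  exact Subtype.ext (map_invol_invol (rmap_invol ha0 hm) _)

end Tau

end Stmt14



-- Part 6c: the key combinatorial estimate
namespace Stmt14

lemma preimage_finite_of_strictMono {b : ℕ → ℕ} (hb : StrictMono b) {F : Set ℕ}
    (hF : F.Finite) : {n | b n ∈ F}.Finite :=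
  (hF.preimage (hb.injective.injOn)).subset fun n hn => hn

lemma key_finite {a : ℕ → ℕ} (ha0 : a 0 = 0) (hm : StrictMono a)
    {A C D : Set ℕ} (haA : ∀ n : ℕ, a (n + 1) ∈ A)
    (hCD : (C \ (· + 1) ⁻¹' D).Finite)
    (hdi : (A ∩ ((· + 1) '' C)).Finite ∨ (A \ ((· + 1) '' C)).Finite) :
    (C \ gmap a ⁻¹' D).Finite := by
  set E := C \ (· + 1) ⁻¹' D with hE
  set N := {n : ℕ | a (n + 1) - 1 ∈ C ∧ gmap a (a (n + 1) - 1) ∉ D} with hN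
  have hsub : C \ gmap a ⁻¹' D ⊆ E ∪ (fun n => a (n + 1) - 1) '' N := by
    rintro k ⟨hkC, hkD⟩
    rcases gmap_cases ha0 hm k with h | ⟨n, rfl⟩
    · exact Or.inl ⟨hkC, fun hD => hkD (by simp only [Set.mem_preimage] at hD ⊢; rw [h]; exact hD)⟩
    · exact Or.inr ⟨n, ⟨hkC, hkD⟩, rfl⟩
  have hNfin : N.Finite := by
    rcases hdi with h1 | h2
    · -- boundaries eventually avoid C
      have : N ⊆ {n | a (n + 1) ∈ A ∩ ((· + 1) '' C)} := by
        rintro n ⟨hnC, -⟩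
        have hpos : 0 < a (n + 1) := by
          have : a 0 < a (n + 1) := hm (Nat.succ_pos n)
          omega
        exact ⟨haA n, ⟨a (n + 1) - 1, hnC, by show a (n + 1) - 1 + 1 = a (n + 1); omega⟩⟩
      exact (preimage_finite_of_strictMono (hm.comp fun _ _ h => by omega : StrictMono fun n => a (n + 1)) h1).subset this
    · -- boundaries eventually inside C + 1
      have : N ⊆ {0, 1} ∪ {n | a (n - 1) ∈ A \ ((· + 1) '' C)} ∪ {n | a (n - 1) ∈ (· + 1) '' E} := by
        rintro n ⟨hnC, hnD⟩
        by_cases hn2 : 2 ≤ n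
        · have hgv : gmap a (a (n + 1) - 1) = a (n - 1) := gmap_top ha0 hm (by omega)
          by_cases hmem : a (n - 1) ∈ (· + 1) '' C
          · refine Set.mem_union_right _ ?_
            obtain ⟨c, hcC, hc⟩ := hmem
            refine ⟨c, ⟨hcC, fun hcd => ?_⟩, hc⟩
            simp only [Set.mem_preimage] at hcd
            apply hnD
            rw [hgv, ← hc]
            exact hcd
          · refine Set.mem_union_left _ (Set.mem_union_right _ ?_)
            have hneq : n - 1 = (n - 2) + 1 := by omega
            exact ⟨by rw [hneq]; exact haA _, hmem⟩
        · refine Set.mem_union_left _ (Set.mem_union_left _ ?_)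
          simp only [Set.mem_insert_iff, Set.mem_singleton_iff]
          omega
      refine (Set.Finite.union (Set.Finite.union (by simp) ?_) ?_).subset this
      · -- {n | a (n-1) ∈ F2} finite
        have hsub2 : {n | a (n - 1) ∈ A \ ((· + 1) '' C)} ⊆
            {0} ∪ (· + 1) '' {m | a m ∈ A \ ((· + 1) '' C)} := by
          intro n hn
          rcases Nat.eq_zero_or_pos n with rfl | hpos
          · exact Or.inl rfl
          · exact Or.inr ⟨n - 1, hn, by show n - 1 + 1 = n; omega⟩
        exact ((Set.finite_singleton 0).union
          ((preimage_finite_of_strictMono hm h2).image _)).subset hsub2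
      · have hEfin : ((· + 1) '' E).Finite := hCD.image _
        have hsub3 : {n | a (n - 1) ∈ (· + 1) '' E} ⊆
            {0} ∪ (· + 1) '' {m | a m ∈ (· + 1) '' E} := by
          intro n hn
          rcases Nat.eq_zero_or_pos n with rfl | hpos
          · exact Or.inl rfl
          · exact Or.inr ⟨n - 1, hn, by show n - 1 + 1 = n; omega⟩
        exact ((Set.finite_singleton 0).union
          ((preimage_finite_of_strictMono hm hEfin).image _)).subset hsub3
  exact (hCD.union (hNfin.image _)).subset hsub

end Stmt14



-- Part 6d: describing open neighborhoods by (C,D)-pairs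
namespace Stmt14

lemma open_nbhd_pairs {V : Set H} (hV : IsOpen V) {f : H} (hf : f ∈ V) :
    ∃ P : Set (Set ℕ × Set ℕ), P.Finite ∧
      (∀ p ∈ P, ∀ u : NStar, p.1 ∈ u.1 → p.2 ∈ (f u).1) ∧
      (∀ g : H, (∀ p ∈ P, ∀ u : NStar, p.1 ∈ u.1 → p.2 ∈ (g u).1) → g ∈ V) := by
  obtain ⟨t, ⟨F, ⟨hFfin, hFgen⟩, rfl⟩, hft, htV⟩ :=
    basisH.exists_subset_of_mem_open hf hV
  have key : ∀ s, s ∈ F → ∃ p : Set ℕ × Set ℕ,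
      (∀ u : NStar, p.1 ∈ u.1 → p.2 ∈ (f u).1) ∧
      (∀ g : H, (∀ u : NStar, p.1 ∈ u.1 → p.2 ∈ (g u).1) → g ∈ s) := by
    intro s hs
    obtain ⟨K, U, hK, hU, rfl⟩ := hFgen hs
    have hfs : f ∈ {h : H | ∀ x ∈ K, h x ∈ U} := hft _ hs
    have hKU : K ⊆ ⇑f ⁻¹' U := fun x hx => hfs x hx
    obtain ⟨C, hC1, hC2⟩ := exists_star_between hK (hU.preimage f.continuous) hKU
    have himg : ⇑f '' star C ⊆ U := by
      rintro y ⟨x, hx, rfl⟩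
      exact hC2 hx
    obtain ⟨D, hD1, hD2⟩ := exists_star_between
      ((isCompact_star C).image f.continuous) hU himg
    refine ⟨(C, D), ?_, ?_⟩
    · intro u hu
      exact hD1 ⟨u, hu, rfl⟩
    · intro g hg x hx
      exact hD2 (hg x (hC1 hx))
  choose! pick hp1 hp2 using key
  refine ⟨pick '' F, hFfin.image _, ?_, ?_⟩
  · rintro p ⟨s, hs, rfl⟩
    exact hp1 s hs
  · intro g hg
    apply htV
    intro s hs
    exact hp2 s hs g (hg (pick s) ⟨s, hs, rfl⟩)

-- Part 6e: the core construction
lemma core (ι : Type) (hι : Cardinal.mk ι < splittingNumber)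
    (W : ι → Set H) (hW : ∀ i, IsOpen (W i)) (hσ : ∀ i, sigmaShift ∈ W i) :
    ∃ τ : H, (∀ i, τ ∈ W i) ∧ τ ∈ IsoSigmaInv := by
  choose P hPfin hP1 hP2 using fun i => open_nbhd_pairs (hW i) (hσ i)
  set S : Set (Set ℕ) := ⋃ i, (fun p : Set ℕ × Set ℕ => (· + 1) '' p.1) '' (P i) with hS
  have hScard : Cardinal.mk S < splittingNumber := by
    have h1 : Cardinal.mk S ≤ Cardinal.mk ι * Cardinal.aleph0 := by
      refine (Cardinal.mk_iUnion_le _).trans ?_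
      refine mul_le_mul' le_rfl (ciSup_le' fun i => ?_)
      have : ((fun p : Set ℕ × Set ℕ => (· + 1) '' p.1) '' (P i)).Finite :=
        (hPfin i).image _
      exact Cardinal.mk_le_aleph0_iff.mpr (Set.countable_coe_iff.mp this.countable)
    rcases le_or_gt (Cardinal.mk ι) Cardinal.aleph0 with h | h
    · calc Cardinal.mk S ≤ Cardinal.mk ι * Cardinal.aleph0 := h1
        _ ≤ Cardinal.aleph0 * Cardinal.aleph0 := mul_le_mul' h le_rfl
        _ = Cardinal.aleph0 := Cardinal.aleph0_mul_aleph0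
        _ < splittingNumber := aleph0_lt_splittingNumber
    · calc Cardinal.mk S ≤ Cardinal.mk ι * Cardinal.aleph0 := h1
        _ = max (Cardinal.mk ι) Cardinal.aleph0 := Cardinal.mul_eq_max h.le le_rfl
        _ = Cardinal.mk ι := max_eq_left h.le
        _ < splittingNumber := hι
  obtain ⟨A, hAinf, hAuns⟩ := exists_unsplit hScard
  -- the boundary sequence
  have hA'inf : {x | x ∈ A \ {0}}.Infinite := by
    have : (A \ {0}).Infinite := hAinf.diff (Set.finite_singleton 0)
    exact this
  set a : ℕ → ℕ := fun n => Nat.rec 0 (fun m _ => Nat.nth (· ∈ A \ {0}) m) n with ha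
  have ha0 : a 0 = 0 := rfl
  have haA : ∀ n : ℕ, a (n + 1) ∈ A := by
    intro n
    have h := Nat.nth_mem_of_infinite hA'inf n
    exact h.1
  have hm : StrictMono a := by
    apply strictMono_nat_of_lt_succ
    intro n
    cases n with
    | zero =>
      have h := Nat.nth_mem_of_infinite hA'inf 0
      have : Nat.nth (· ∈ A \ {0}) 0 ≠ 0 := h.2
      show 0 < Nat.nth (· ∈ A \ {0}) 0
      omega
    | succ m =>
      show Nat.nth (· ∈ A \ {0}) m < Nat.nth (· ∈ A \ {0}) (m + 1)
      exact Nat.nth_strictMono hA'inf (Nat.lt_succ_self m)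
  refine ⟨tauHomeo ha0 hm, fun i => ?_, tau_mem_isoInv ha0 hm⟩
  apply hP2 i
  intro p hp
  rw [star_maps_iff (tau_coe ha0 hm) p.1 p.2]
  have hCD : (p.1 \ (· + 1) ⁻¹' p.2).Finite := by
    rw [← star_maps_iff (fun u => rfl : ∀ u : NStar, (sigmaShift u).1
      = Ultrafilter.map (· + 1) u.1) p.1 p.2]
    exact hP1 i p hp
  have hdi : (A ∩ ((· + 1) '' p.1)).Finite ∨ (A \ ((· + 1) '' p.1)).Finite := by
    apply hAuns
    exact Set.mem_iUnion.mpr ⟨i, ⟨p, hp, rfl⟩⟩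
  exact key_finite ha0 hm haA hCD hdi

end Stmt14



-- Part 7: assembly
namespace Stmt14

lemma iso_symm {h f : H} (hyp : Isomorphic h f) : Isomorphic h.symm f.symm := by
  obtain ⟨k, hk⟩ := hyp
  refine ⟨k, fun u => ?_⟩
  have := hk (h.symm u)
  rw [h.apply_symm_apply] at this
  rw [this, f.symm_apply_apply]

lemma main_forward (ι : Type) (hι : Cardinal.mk ι < splittingNumber)
    (U : ι → Set H) (hU : ∀ i, IsOpen (U i)) :
    ((⋂ i, U i) ∩ IsoSigma).Nonempty → ((⋂ i, U i) ∩ IsoSigmaInv).Nonempty := by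
  rintro ⟨h, hG, k, hk⟩
  -- conjugating by k turns h into σ
  have hconj : (k.symm.trans h).trans k = sigmaShift := by
    refine Homeomorph.ext fun u => ?_
    show k (h (k.symm u)) = sigmaShift u
    rw [hk (k.symm u), k.apply_symm_apply]
  set Ψ : H → H := fun x => (k.trans x).trans k.symm with hΨ
  set W : ι → Set H := fun i => Ψ ⁻¹' (U i) with hWdef
  have hWopen : ∀ i, IsOpen (W i) := by
    intro i
    have hc : Continuous Ψ := by
      have := continuous_conj k.symm
      simpa [Homeomorph.symm_symm] using this
    exact hc.isOpen_preimage _ (hU i)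
  have hσW : ∀ i, sigmaShift ∈ W i := by
    intro i
    show Ψ sigmaShift ∈ U i
    rw [← hconj, hΨ]
    show (k.trans ((k.symm.trans h).trans k)).trans k.symm ∈ U i
    rw [conj_conj]
    exact Set.mem_iInter.mp hG i
  obtain ⟨τ, hτW, k₀, hk₀⟩ := core ι hι W hWopen hσW
  refine ⟨Ψ τ, Set.mem_iInter.mpr fun i => hτW i, ?_⟩
  refine ⟨k.trans k₀, fun u => ?_⟩
  show k₀ (k (k.symm (τ (k u)))) = sigmaShift.symm (k₀ (k u))
  rw [k.apply_symm_apply]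
  exact hk₀ (k u)

end Stmt14

open Stmt14 in
private lemma stmt14_aux (ι : Type) (hι : Cardinal.mk ι < splittingNumber)
    (U : ι → Set (NStar ≃ₜ NStar)) (hU : ∀ i, IsOpen (U i)) :
    ((⋂ i, U i) ∩ IsoSigma).Nonempty ↔ ((⋂ i, U i) ∩ IsoSigmaInv).Nonempty := by
  constructor
  · exact main_forward ι hι U hU
  · rintro ⟨h, hG, hiso⟩
    set V : ι → Set H := fun i => (fun x : H => x.symm) ⁻¹' (U i) with hVdef
    have hVopen : ∀ i, IsOpen (V i) := fun i => Stmt14.continuous_inv.isOpen_preimage _ (hU i)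
    have hmem : h.symm ∈ (⋂ i, V i) ∩ IsoSigma := by
      constructor
      · refine Set.mem_iInter.mpr fun i => ?_
        show h.symm.symm ∈ U i
        rw [Homeomorph.symm_symm]
        exact Set.mem_iInter.mp hG i
      · have := iso_symm hiso
        rwa [Homeomorph.symm_symm] at this
    obtain ⟨t, htV, htiso⟩ := main_forward ι hι V hVopen ⟨h.symm, hmem⟩
    refine ⟨t.symm, ?_, ?_⟩
    · exact Set.mem_iInter.mpr fun i => Set.mem_iInter.mp htV i
    · exact iso_symm htiso


/-- If `G ⊆ H(ω*)` is an intersection of fewer than `𝔰` many open sets, then `G`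
meets `Iso(σ)` if and only if `G` meets `Iso(σ⁻¹)`. -/

theorem stmt_14 (ι : Type) (hι : Cardinal.mk ι < splittingNumber)
    (U : ι → Set (NStar ≃ₜ NStar)) (hU : ∀ i, IsOpen (U i)) :
    ((⋂ i, U i) ∩ IsoSigma).Nonempty ↔ ((⋂ i, U i) ∩ IsoSigmaInv).Nonempty := by
  exact stmt14_aux ι hι U hU
end
end

section
/- If {U_n : n ∈ ω} is a countable family of dense open subsets of the subspace Iso(σ) of H(ω*), then the set of trivial maps belonging to ⋂_{n ∈ ω} U_n is dense in Iso(σ). -/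
open Set TopologicalSpace

noncomputable section

/-- `f : ω → ω` is a mod-finite permutation of `ω`: it restricts to a bijection
between two cofinite subsets of `ω`. -/
def ModFinPerm (f : ℕ → ℕ) : Prop :=
  ∃ A B : Set ℕ, A.Finite ∧ B.Finite ∧ Set.BijOn f Aᶜ Bᶜ

/-- `h ∈ H(ω*)` is trivial: it is induced by a mod-finite permutation `f` of `ω`,
i.e. `h(u)` is the ultrafilter generated by `{f[A] : A ∈ u}` for every `u ∈ ω*`. -/
def IsTrivialHomeo (h : NStar ≃ₜ NStar) : Prop :=
  ∃ f : ℕ → ℕ, ModFinPerm f ∧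
    ∀ (u : NStar) (A : Set ℕ), A ∈ u.1 → f '' A ∈ (h u).1

namespace S17

def st (A : Set ℕ) : Set NStar := {u | A ∈ u.1}

lemma mem_st {A : Set ℕ} {u : NStar} : u ∈ st A ↔ A ∈ u.1 := Iff.rfl

lemma st_inter (A B : Set ℕ) : st (A ∩ B) = st A ∩ st B := by
  ext u; exact Filter.inter_mem_iff

lemma st_compl (A : Set ℕ) : st Aᶜ = (st A)ᶜ := by
  ext u; exact Ultrafilter.compl_mem_iff_notMem

lemma st_mono {A B : Set ℕ} (h : A ⊆ B) : st A ⊆ st B :=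
  fun _ hu => Filter.mem_of_superset hu h

lemma st_univ : st univ = univ := eq_univ_of_forall fun u => Filter.univ_mem

lemma st_empty : st ∅ = ∅ := by
  ext u; simp [st, Filter.empty_notMem]

/-- A free ultrafilter containing any infinite set. -/
lemma exists_mem_st {A : Set ℕ} (hA : A.Infinite) : ∃ u : NStar, A ∈ u.1 := by
  have hne : Filter.NeBot (Filter.cofinite ⊓ Filter.principal A) := by
    rw [Filter.inf_principal_neBot_iff]
    intro U hU
    have : (A \ Uᶜ).Infinite := hA.diff hU
    rcases this.nonempty with ⟨x, hx1, hx2⟩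
    exact ⟨x, by simpa using hx2, hx1⟩
  obtain ⟨u, hu⟩ := Filter.exists_ultrafilter_le (Filter.cofinite ⊓ Filter.principal A)
  have hcof : (u : Filter ℕ) ≤ Filter.cofinite := hu.trans inf_le_left
  refine ⟨⟨u, ?_⟩, ?_⟩
  · intro n hn
    have h1 : ({n}ᶜ : Set ℕ) ∈ u := hcof (by simp [Set.finite_singleton])
    have h2 : ({n} : Set ℕ) ∈ u := by rw [hn]; exact Filter.mem_pure.mpr rfl
    have := Filter.inter_mem h1 h2
    simp at this
  · exact (hu.trans inf_le_right) (Filter.mem_principal_self A)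

lemma st_subset_iff {A B : Set ℕ} : st A ⊆ st B ↔ (A \ B).Finite := by
  constructor
  · intro h
    by_contra hinf
    obtain ⟨u, hu⟩ := exists_mem_st (hinf : (A \ B).Infinite)
    have hA : A ∈ u.1 := Filter.mem_of_superset hu diff_subset
    have hB : B ∈ u.1 := h hA
    have := Filter.inter_mem hu hB
    rw [Set.diff_inter_self] at this
    exact Filter.empty_notMem _ this
  · intro hfin u hu
    have h1 : (A \ B)ᶜ ∈ u.1 := ucofinite u hfin.compl_mem_cofinite
    have := Filter.inter_mem (mem_st.mp hu) h1
    exact Filter.mem_of_superset this (by intro x ⟨hx1, hx2⟩; by_contra hB; exact hx2 ⟨hx1, hB⟩)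

lemma st_eq_empty_iff {A : Set ℕ} : st A = ∅ ↔ A.Finite := by
  constructor
  · intro h
    by_contra hinf
    obtain ⟨u, hu⟩ := exists_mem_st (hinf : A.Infinite)
    exact absurd h (by rw [Set.eq_empty_iff_forall_notMem]; push_neg; exact ⟨u, hu⟩)
  · intro hfin
    rw [Set.eq_empty_iff_forall_notMem]
    intro u hu
    obtain ⟨x, -, hx⟩ := Ultrafilter.eq_pure_of_finite_mem hfin (mem_st.mp hu)
    exact u.2 x hx

lemma st_nonempty_iff {A : Set ℕ} : (st A).Nonempty ↔ A.Infinite := by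
  rw [Set.nonempty_iff_ne_empty]
  exact ⟨fun h hfin => h (st_eq_empty_iff.mpr hfin), fun h he => h (st_eq_empty_iff.mp he)⟩

lemma st_eq_st_iff {A B : Set ℕ} : st A = st B ↔ (A \ B).Finite ∧ (B \ A).Finite := by
  rw [Set.Subset.antisymm_iff, st_subset_iff, st_subset_iff]

lemma isOpen_st (A : Set ℕ) : IsOpen (st A) :=
  (ultrafilter_isOpen_basic A).preimage continuous_subtype_val

lemma isClosed_st (A : Set ℕ) : IsClosed (st A) := by
  rw [← isOpen_compl_iff, ← st_compl]; exact isOpen_st _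

lemma isClosed_nstar : IsClosed {u : Ultrafilter ℕ | ∀ n : ℕ, u ≠ pure n} := by
  have : {u : Ultrafilter ℕ | ∀ n : ℕ, u ≠ pure n} = ⋂ n : ℕ, {u : Ultrafilter ℕ | ({n} : Set ℕ) ∈ u}ᶜ := by
    ext u
    simp only [Set.mem_iInter, Set.mem_compl_iff, Set.mem_setOf_eq]
    refine forall_congr' fun n => ?_
    constructor
    · intro h hmem
      obtain ⟨x, hx, hx2⟩ := Ultrafilter.eq_pure_of_finite_mem (Set.finite_singleton n) hmem
      exact h (by rwa [Set.mem_singleton_iff.mp hx] at hx2)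
    · intro h hu
      exact h (by rw [hu]; exact Filter.mem_pure.mpr rfl)
  rw [this]
  exact isClosed_iInter fun n => (ultrafilter_isOpen_basic _).isClosed_compl

instance : CompactSpace NStar :=
  isCompact_iff_compactSpace.mp (isClosed_nstar.isCompact)

lemma isCompact_st (A : Set ℕ) : IsCompact (st A) := (isClosed_st A).isCompact

lemma nstar_basis : IsTopologicalBasis (Set.range st) := by
  have h := ultrafilterBasis_is_basis (α := ℕ) |>.isInducing
    (Topology.IsInducing.subtypeVal (t := {u : Ultrafilter ℕ | ∀ n : ℕ, u ≠ pure n}))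
  convert h using 1
  case e'_1 => rfl
  rw [ultrafilterBasis]
  ext S
  constructor
  · rintro ⟨A, rfl⟩; exact ⟨{u | A ∈ u}, ⟨A, rfl⟩, rfl⟩
  · rintro ⟨-, ⟨A, rfl⟩, rfl⟩; exact ⟨A, rfl⟩

lemma st_union (A B : Set ℕ) : st (A ∪ B) = st A ∪ st B := by
  ext u; exact Ultrafilter.union_mem_iff

lemma st_biUnion {ι : Type*} (t : Finset ι) (f : ι → Set ℕ) :
    st (⋃ i ∈ t, f i) = ⋃ i ∈ t, st (f i) := by
  classical
  induction t using Finset.induction_on with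
  | empty => simp [st_empty]
  | insert a s hx ih => simp only [Finset.set_biUnion_insert, st_union, ih]

/-- squeeze a compact inside an open by a basic clopen set -/
lemma squeeze {K U : Set NStar} (hK : IsCompact K) (hU : IsOpen U) (hKU : K ⊆ U) :
    ∃ A : Set ℕ, K ⊆ st A ∧ st A ⊆ U := by
  have : ∀ x : NStar, x ∈ K → ∃ A : Set ℕ, x ∈ st A ∧ st A ⊆ U := by
    intro x hx
    obtain ⟨S, ⟨A, rfl⟩, hxS, hSU⟩ := nstar_basis.exists_subset_of_mem_open (hKU hx) hU
    exact ⟨A, hxS, hSU⟩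
  choose A hA1 hA2 using this
  rcases hK.elim_finite_subcover (fun x : K => st (A x x.2)) (fun x => isOpen_st _)
    (fun x hx => Set.mem_iUnion.mpr ⟨⟨x, hx⟩, hA1 _ _⟩) with ⟨t, ht⟩
  refine ⟨⋃ x ∈ t, A x x.2, ?_, ?_⟩
  · rw [st_biUnion]; exact ht
  · rw [st_biUnion]; exact Set.iUnion₂_subset fun x _ => hA2 _ _

lemma clopen_eq_st {C : Set NStar} (hC : IsClopen C) : ∃ A : Set ℕ, C = st A := by
  obtain ⟨A, h1, h2⟩ := squeeze (hC.isClosed.isCompact) hC.isOpen (subset_refl C)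
  exact ⟨A, le_antisymm h1 h2⟩

end S17
namespace S17
open scoped Classical

/-- `g` is an a.e. left inverse of `f`. -/
def AeInv (f g : ℕ → ℕ) : Prop := {n | g (f n) ≠ n}.Finite

lemma map_free {f g : ℕ → ℕ} (h : AeInv f g) (u : NStar) :
    ∀ n, Ultrafilter.map f u.1 ≠ pure n := by
  intro n hn
  have h1 : f ⁻¹' {n} ∈ u.1 := by
    have : {n} ∈ Ultrafilter.map f u.1 := by rw [hn]; exact Ultrafilter.mem_pure.mpr rfl
    exact this
  have h2 : {m | g (f m) = m} ∈ u.1 := by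
    have : {m | g (f m) = m} = {m | g (f m) ≠ m}ᶜ := by ext m; simp
    rw [this]
    exact ucofinite u h.compl_mem_cofinite
  have hsub : f ⁻¹' {n} ∩ {m | g (f m) = m} ⊆ {g n} := by
    rintro m ⟨hm1, hm2⟩
    simp only [Set.mem_preimage, Set.mem_singleton_iff] at hm1 ⊢
    rw [← hm2, hm1]
  have hfin : (f ⁻¹' {n} ∩ {m | g (f m) = m}).Finite :=
    (Set.finite_singleton (g n)).subset hsub
  obtain ⟨x, -, hx⟩ := Ultrafilter.eq_pure_of_finite_mem hfin (Filter.inter_mem h1 h2)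
  exact u.2 x hx

lemma map_map_aeInv {f g : ℕ → ℕ} (h : AeInv f g) (u : NStar) :
    Ultrafilter.map g (Ultrafilter.map f u.1) = u.1 := by
  apply Ultrafilter.coe_injective
  rw [Ultrafilter.coe_map, Ultrafilter.coe_map, Filter.map_map]
  have h1 : (g ∘ f : ℕ → ℕ) =ᶠ[(u.1 : Filter ℕ)] id := ucofinite u h
  calc Filter.map (g ∘ f) (u.1 : Filter ℕ)
      = Filter.map id (u.1 : Filter ℕ) := Filter.map_congr h1
    _ = (u.1 : Filter ℕ) := Filter.map_id

/-- The self-homeomorphism of `ω*` induced by a mod-finite permutation (given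
with an a.e. two-sided inverse). -/
def mfpHomeo (f g : ℕ → ℕ) (h1 : AeInv f g) (h2 : AeInv g f) : NStar ≃ₜ NStar where
  toFun u := ⟨Ultrafilter.map f u.1, map_free h1 u⟩
  invFun u := ⟨Ultrafilter.map g u.1, map_free h2 u⟩
  left_inv u := Subtype.ext (map_map_aeInv h1 u)
  right_inv u := Subtype.ext (map_map_aeInv h2 u)
  continuous_toFun :=
    Continuous.subtype_mk ((continuous_umap f).comp continuous_subtype_val) _
  continuous_invFun :=
    Continuous.subtype_mk ((continuous_umap g).comp continuous_subtype_val) _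

@[simp] lemma mfpHomeo_apply (f g : ℕ → ℕ) (h1 : AeInv f g) (h2 : AeInv g f) (u : NStar) :
    (mfpHomeo f g h1 h2 u).1 = Ultrafilter.map f u.1 := rfl

/-! ### Spines -/

/-- successor along an injective enumeration `x` -/
def spineF (x : ℕ → ℕ) : ℕ → ℕ := fun m =>
  if h : ∃ n, x n = m then x (h.choose + 1) else m

/-- predecessor along an injective enumeration `x` -/
def spineG (x : ℕ → ℕ) : ℕ → ℕ := fun m =>
  if h : ∃ n, x (n + 1) = m then x h.choose else m

/-- index along `x` -/
def spineIdx (x : ℕ → ℕ) : ℕ → ℕ := fun m => if h : ∃ n, x n = m then h.choose else 0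

variable {x : ℕ → ℕ}

lemma spineF_eq (hx : Function.Injective x) (n : ℕ) : spineF x (x n) = x (n + 1) := by
  have h : ∃ k, x k = x n := ⟨n, rfl⟩
  have : h.choose = n := hx h.choose_spec
  simp only [spineF, dif_pos h, this]

lemma spineG_eq (hx : Function.Injective x) (n : ℕ) : spineG x (x (n + 1)) = x n := by
  have h : ∃ k, x (k + 1) = x (n + 1) := ⟨n, rfl⟩
  have : h.choose = n := by
    have := h.choose_spec
    exact Nat.succ_injective (hx this)
  simp only [spineG, dif_pos h, this]

lemma spineIdx_eq (hx : Function.Injective x) (n : ℕ) : spineIdx x (x n) = n := by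
  have h : ∃ k, x k = x n := ⟨n, rfl⟩
  have : h.choose = n := hx h.choose_spec
  simp only [spineIdx, dif_pos h, this]

lemma spine_aeInv1 (hx : Function.Injective x) (hc : (Set.range x)ᶜ.Finite) :
    AeInv (spineF x) (spineG x) := by
  apply hc.subset
  intro m hm
  simp only [Set.mem_setOf_eq] at hm
  simp only [Set.mem_compl_iff, Set.mem_range]
  rintro ⟨n, rfl⟩
  exact hm (by rw [spineF_eq hx, spineG_eq hx])

lemma spine_aeInv2 (hx : Function.Injective x) (hc : (Set.range x)ᶜ.Finite) :
    AeInv (spineG x) (spineF x) := by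
  apply Set.Finite.subset (hc.union (Set.finite_singleton (x 0)))
  intro m hm
  simp only [Set.mem_setOf_eq] at hm
  simp only [Set.mem_union, Set.mem_compl_iff, Set.mem_range, Set.mem_singleton_iff]
  by_contra hcon
  push_neg at hcon
  obtain ⟨⟨n, rfl⟩, hne⟩ := hcon
  rcases n with _ | k
  · exact hne rfl
  · exact hm (by rw [spineG_eq hx, spineF_eq hx])

/-- The trivial self-homeomorphism of `ω*` determined by a spine `x`. -/
def spineHomeo (x : ℕ → ℕ) (hx : Function.Injective x) (hc : (Set.range x)ᶜ.Finite) :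
    NStar ≃ₜ NStar :=
  mfpHomeo (spineF x) (spineG x) (spine_aeInv1 hx hc) (spine_aeInv2 hx hc)

lemma spineHomeo_trivial (hx : Function.Injective x) (hc : (Set.range x)ᶜ.Finite) :
    IsTrivialHomeo (spineHomeo x hx hc) := by
  refine ⟨spineF x, ⟨(Set.range x)ᶜ, (Set.range x)ᶜ ∪ {x 0}, hc,
    hc.union (Set.finite_singleton (x 0)), ?_⟩, ?_⟩
  · rw [compl_compl, Set.compl_union, compl_compl]
    constructor
    · rintro m ⟨n, rfl⟩
      rw [spineF_eq hx]
      refine ⟨⟨n + 1, rfl⟩, ?_⟩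
      simp only [Set.mem_compl_iff, Set.mem_singleton_iff]
      intro h
      exact Nat.succ_ne_zero n (hx h)
    constructor
    · rintro m ⟨n, rfl⟩ m' ⟨k, rfl⟩ h
      rw [spineF_eq hx, spineF_eq hx] at h
      rw [Nat.succ_injective (hx h)]
    · rintro m ⟨⟨n, rfl⟩, hne⟩
      simp only [Set.mem_compl_iff, Set.mem_singleton_iff] at hne
      rcases n with _ | k
      · exact absurd rfl hne
      · exact ⟨x k, ⟨k, rfl⟩, by rw [spineF_eq hx]⟩
  · intro u A hA
    have : A ⊆ (spineF x) ⁻¹' ((spineF x) '' A) := Set.subset_preimage_image _ _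
    exact Ultrafilter.mem_map.mpr (Filter.mem_of_superset hA this)

/-- the conjugating map: `j = mfpHomeo x (spineIdx x)` -/
def spineConj (x : ℕ → ℕ) (hx : Function.Injective x) (hc : (Set.range x)ᶜ.Finite) :
    NStar ≃ₜ NStar :=
  mfpHomeo x (spineIdx x)
    (by
      apply Set.Finite.subset (Set.finite_empty)
      intro m hm
      simp only [Set.mem_setOf_eq] at hm
      exact hm (spineIdx_eq hx m))
    (by
      apply hc.subset
      intro m hm
      simp only [Set.mem_setOf_eq] at hm
      simp only [Set.mem_compl_iff, Set.mem_range]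
      rintro ⟨n, rfl⟩
      exact hm (by rw [spineIdx_eq hx]))

lemma spineHomeo_conj (hx : Function.Injective x) (hc : (Set.range x)ᶜ.Finite) (v : NStar) :
    spineHomeo x hx hc (spineConj x hx hc v) = spineConj x hx hc (sigmaShift v) := by
  apply Subtype.ext
  show Ultrafilter.map (spineF x) (Ultrafilter.map x v.1)
      = Ultrafilter.map x (Ultrafilter.map (· + 1) v.1)
  apply Ultrafilter.coe_injective
  rw [Ultrafilter.coe_map, Ultrafilter.coe_map, Ultrafilter.coe_map, Ultrafilter.coe_map,
    Filter.map_map, Filter.map_map]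
  congr 1
  funext n
  exact spineF_eq hx n

lemma spineHomeo_mem_iso (hx : Function.Injective x) (hc : (Set.range x)ᶜ.Finite) :
    spineHomeo x hx hc ∈ IsoSigma := by
  refine ⟨(spineConj x hx hc).symm, fun u => ?_⟩
  have h1 := spineHomeo_conj hx hc ((spineConj x hx hc).symm u)
  rw [Homeomorph.apply_symm_apply] at h1
  rw [h1, Homeomorph.symm_apply_apply]

/-! ### basic open sets of the compact-open topology -/

def Vp (A B : Set ℕ) : Set (NStar ≃ₜ NStar) := {h | ∀ u ∈ st A, h u ∈ st B}

lemma isOpen_Vp (A B : Set ℕ) : IsOpen (Vp A B) :=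
  TopologicalSpace.isOpen_generateFrom_of_mem
    ⟨st A, st B, isCompact_st A, isOpen_st B, rfl⟩

def WL (L : List (Set ℕ × Set ℕ)) : Set (NStar ≃ₜ NStar) :=
  {h | ∀ c ∈ L, h ∈ Vp c.1 c.2}

lemma isOpen_WL (L : List (Set ℕ × Set ℕ)) : IsOpen (WL L) := by
  induction L with
  | nil => simpa [WL] using isOpen_univ
  | cons c L ih =>
      have : WL (c :: L) = Vp c.1 c.2 ∩ WL L := by
        ext h; simp [WL, List.mem_cons, or_imp, forall_and]
      rw [this]
      exact (isOpen_Vp c.1 c.2).inter ih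

lemma WL_mono {L L' : List (Set ℕ × Set ℕ)} (h : ∀ c ∈ L, c ∈ L') : WL L' ⊆ WL L :=
  fun g hg c hc => hg c (h c hc)

lemma WL_append (L L' : List (Set ℕ × Set ℕ)) : WL (L ++ L') = WL L ∩ WL L' := by
  ext h; simp [WL, List.mem_append, or_imp, forall_and]

/-- membership of a trivial map in `Vp A B` from finite combinatorial data -/
lemma mfpHomeo_mem_Vp {f g : ℕ → ℕ} {h1 : AeInv f g} {h2 : AeInv g f} {A B : Set ℕ}
    (h : (A \ f ⁻¹' B).Finite) : mfpHomeo f g h1 h2 ∈ Vp A B := by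
  intro u hu
  have : u ∈ st (f ⁻¹' B) := st_subset_iff.mpr h hu
  exact Ultrafilter.mem_map.mpr this

/-- every open set in the compact-open topology contains a `WL`-neighborhood
of each of its points -/
lemma exists_WL_nbhd {O : Set (NStar ≃ₜ NStar)} (hO : IsOpen O) {h : NStar ≃ₜ NStar}
    (hh : h ∈ O) : ∃ L, h ∈ WL L ∧ WL L ⊆ O := by
  have basis := TopologicalSpace.isTopologicalBasis_of_subbasis
    (s := {S : Set (NStar ≃ₜ NStar) | ∃ K U : Set NStar, IsCompact K ∧ IsOpen U ∧
      S = {h : NStar ≃ₜ NStar | ∀ x ∈ K, h x ∈ U}}) rfl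
  obtain ⟨S, ⟨F, ⟨hFfin, hFsub⟩, rfl⟩, hhS, hSO⟩ := basis.exists_subset_of_mem_open hh hO
  have key : ∀ T ∈ F, ∃ A B : Set ℕ, h ∈ Vp A B ∧ Vp A B ⊆ T := by
    intro T hT
    obtain ⟨K, U, hK, hU, rfl⟩ := hFsub hT
    have hhT : ∀ y ∈ K, h y ∈ U := hhS _ hT
    have hKU : K ⊆ ⇑h ⁻¹' U := fun y hy => hhT y hy
    obtain ⟨A, hA1, hA2⟩ := squeeze hK (hU.preimage h.continuous) hKU
    have himg : IsCompact (⇑h '' st A) := (isCompact_st A).image h.continuous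
    obtain ⟨B, hB1, hB2⟩ := squeeze himg hU (by
      rintro y ⟨u, hu, rfl⟩; exact hA2 hu)
    refine ⟨A, B, fun u hu => hB1 ⟨u, hu, rfl⟩, fun g hg y hy => hB2 (hg y (hA1 hy))⟩
  choose! A B hAB1 hAB2 using key
  classical
  refine ⟨hFfin.toFinset.toList.map (fun T => (A T, B T)), ?_, ?_⟩
  · intro c hc
    simp only [List.mem_map, Finset.mem_toList, Set.Finite.mem_toFinset] at hc
    obtain ⟨T, hT, rfl⟩ := hc
    exact hAB1 T hT
  · intro g hg
    apply hSO
    intro T hT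
    have : (A T, B T) ∈ hFfin.toFinset.toList.map (fun T => (A T, B T)) := by
      simp only [List.mem_map, Finset.mem_toList, Set.Finite.mem_toFinset]
      exact ⟨T, hT, rfl⟩
    exact hAB2 T hT (hg _ this)

/-- subtype version for `Iso(σ)` -/
lemma exists_WL_nbhd' {O : Set ↥IsoSigma} (hO : IsOpen O) {h : ↥IsoSigma} (hh : h ∈ O) :
    ∃ L, h.1 ∈ WL L ∧ ∀ g : ↥IsoSigma, g.1 ∈ WL L → g ∈ O := by
  obtain ⟨O', hO', rfl⟩ := isOpen_induced_iff.mp hO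
  obtain ⟨L, h1, h2⟩ := exists_WL_nbhd hO' hh
  exact ⟨L, h1, fun g hg => h2 hg⟩

end S17
namespace S17

/-! ### classes, legal-successor sets, E-codes -/

/-- the `L`-class of `u`: naturals with the same membership pattern in the first
coordinates of `L` -/
def Cls (L : List (Set ℕ × Set ℕ)) (u : ℕ) : Set ℕ :=
  {v | ∀ c ∈ L, (u ∈ c.1 ↔ v ∈ c.1)}

/-- the set of legal successors of `u` for the condition list `L` -/
def Qs (L : List (Set ℕ × Set ℕ)) (u : ℕ) : Set ℕ :=
  {v | ∀ c ∈ L, u ∈ c.1 → v ∈ c.2}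

/-- the transition `a → b` is legal for `L` -/
def Ok (L : List (Set ℕ × Set ℕ)) (a b : ℕ) : Prop := b ∈ Qs L a

lemma mem_Cls_self (L : List (Set ℕ × Set ℕ)) (u : ℕ) : u ∈ Cls L u :=
  fun _ _ => Iff.rfl

lemma Cls_eq_of_mem {L : List (Set ℕ × Set ℕ)} {u v : ℕ} (h : v ∈ Cls L u) :
    Cls L v = Cls L u := by
  ext m
  exact forall₂_congr fun c hc => by rw [(h c hc)]

lemma Qs_eq_of_mem {L : List (Set ℕ × Set ℕ)} {u v : ℕ} (h : v ∈ Cls L u) :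
    Qs L v = Qs L u := by
  ext m
  exact forall₂_congr fun c hc => by rw [(h c hc)]

lemma Cls_anti {L L' : List (Set ℕ × Set ℕ)} (h : ∀ c ∈ L, c ∈ L') (u : ℕ) :
    Cls L' u ⊆ Cls L u := fun v hv c hc => hv c (h c hc)

lemma Qs_anti {L L' : List (Set ℕ × Set ℕ)} (h : ∀ c ∈ L, c ∈ L') (u : ℕ) :
    Qs L' u ⊆ Qs L u := fun v hv c hc => hv c (h c hc)

lemma Ok_anti {L L' : List (Set ℕ × Set ℕ)} (h : ∀ c ∈ L, c ∈ L') {a b : ℕ}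
    (hab : Ok L' a b) : Ok L a b := Qs_anti h a hab

lemma Cls_disjoint {L : List (Set ℕ × Set ℕ)} {u v : ℕ} (h : Cls L u ≠ Cls L v) :
    Cls L u ∩ Cls L v = ∅ := by
  rw [Set.eq_empty_iff_forall_notMem]
  rintro m ⟨hm1, hm2⟩
  exact h (by rw [← Cls_eq_of_mem hm1, ← Cls_eq_of_mem hm2])

lemma cls_range_finite (L : List (Set ℕ × Set ℕ)) : (Set.range (Cls L)).Finite := by
  classical
  haveI hfin : Finite {c // c ∈ L} := L.finite_toSet.to_subtype
  set π : ℕ → ({c // c ∈ L} → Prop) := fun u c => u ∈ c.1.1 with hπ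
  have key : ∀ u, Cls L u = π ⁻¹' {π u} := by
    intro u
    ext v
    simp only [Set.mem_preimage, Set.mem_singleton_iff, funext_iff, eq_iff_iff, hπ]
    constructor
    · intro h c; exact (h c.1 c.2).symm
    · intro h c hc; exact (h ⟨c, hc⟩).symm
  have : Set.range (Cls L) ⊆ (fun s => π ⁻¹' {s}) '' (Set.range π) := by
    rintro S ⟨u, rfl⟩
    exact ⟨π u, ⟨u, rfl⟩, (key u).symm⟩
  exact ((Set.Finite.subset Set.finite_univ (Set.subset_univ (Set.range π))).image _).subset this

/-- a finite set of representatives for the `L`-classes -/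
lemma exists_reps (L : List (Set ℕ × Set ℕ)) :
    ∃ t : Finset ℕ, ∀ u, ∃ r ∈ t, Cls L r = Cls L u := by
  classical
  obtain ⟨t₀, ht₀⟩ := (cls_range_finite L).exists_finset_coe
  set f : Set ℕ → ℕ := fun S => if h : ∃ u, Cls L u = S then h.choose else 0 with hf
  refine ⟨t₀.image f, fun u => ?_⟩
  have hmem : Cls L u ∈ (t₀ : Set (Set ℕ)) := by rw [ht₀]; exact ⟨u, rfl⟩
  have hex : ∃ v, Cls L v = Cls L u := ⟨u, rfl⟩
  refine ⟨f (Cls L u), Finset.mem_image_of_mem f hmem, ?_⟩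
  rw [hf]
  simp only [dif_pos hex]
  exact hex.choose_spec

/-- representative set for classes of `L` -/
def reps (L : List (Set ℕ × Set ℕ)) : Finset ℕ := (exists_reps L).choose

lemma reps_spec (L : List (Set ℕ × Set ℕ)) (u : ℕ) :
    ∃ r ∈ reps L, Cls L r = Cls L u := (exists_reps L).choose_spec u

/-! ### clopen codes -/

lemma isClopen_image_st (h : NStar ≃ₜ NStar) (A : Set ℕ) : IsClopen (⇑h '' st A) :=
  ⟨(h.isClosedMap _ (isClosed_st A)), (h.isOpenMap _ (isOpen_st A))⟩

/-- a subset of `ℕ` coding the clopen set `h '' st A` -/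
def code (h : NStar ≃ₜ NStar) (A : Set ℕ) : Set ℕ :=
  (clopen_eq_st (isClopen_image_st h A)).choose

lemma st_code (h : NStar ≃ₜ NStar) (A : Set ℕ) : st (code h A) = ⇑h '' st A :=
  (clopen_eq_st (isClopen_image_st h A)).choose_spec.symm

/-- the `E`-set of `u` : the code of `h '' st (Cls L u)` -/
def ECl (L : List (Set ℕ × Set ℕ)) (h : NStar ≃ₜ NStar) (u : ℕ) : Set ℕ :=
  code h (Cls L u)

lemma ECl_congr {L : List (Set ℕ × Set ℕ)} (h : NStar ≃ₜ NStar) {u v : ℕ}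
    (huv : Cls L u = Cls L v) : ECl L h u = ECl L h v := by
  unfold ECl; rw [huv]

lemma st_ECl (L : List (Set ℕ × Set ℕ)) (h : NStar ≃ₜ NStar) (u : ℕ) :
    st (ECl L h u) = ⇑h '' st (Cls L u) := st_code h (Cls L u)

lemma ECl_infinite_iff (L : List (Set ℕ × Set ℕ)) (h : NStar ≃ₜ NStar) (u : ℕ) :
    (ECl L h u).Infinite ↔ (Cls L u).Infinite := by
  rw [← st_nonempty_iff, ← st_nonempty_iff, st_ECl]
  exact Set.image_nonempty

lemma mem_st_Qs {L : List (Set ℕ × Set ℕ)} {u : ℕ} {v : NStar}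
    (h : ∀ c ∈ L, u ∈ c.1 → c.2 ∈ v.1) : Qs L u ∈ v.1 := by
  induction L with
  | nil => exact Filter.mem_of_superset Filter.univ_mem (fun m _ c hc => absurd hc (by simp))
  | cons c L ih =>
      have h1 : {m | u ∈ c.1 → m ∈ c.2} ∈ v.1 := by
        by_cases hu : u ∈ c.1
        · exact Filter.mem_of_superset (h c (List.mem_cons_self) hu) fun m hm _ => hm
        · exact Filter.mem_of_superset Filter.univ_mem fun m _ h' => absurd h' hu
      have h2 : Qs L u ∈ v.1 := ih fun c' hc' => h c' (List.mem_cons_of_mem c hc')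
      refine Filter.mem_of_superset (Filter.inter_mem h1 h2) ?_
      rintro m ⟨hm1, hm2⟩ c' hc'
      rcases List.mem_cons.mp hc' with rfl | hc'
      · exact hm1
      · exact hm2 c' hc'

/-- The `E`-set of `u` is almost contained in the legal-successor set of `u`. -/
lemma ECl_ae_Qs {L : List (Set ℕ × Set ℕ)} {h : NStar ≃ₜ NStar} (hW : h ∈ WL L) (u : ℕ) :
    (ECl L h u \ Qs L u).Finite := by
  rw [← st_subset_iff, st_ECl]
  rintro _ ⟨w, hw, rfl⟩
  apply mem_st_Qs
  intro c hc hu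
  have hwc : w ∈ st c.1 := by
    apply st_mono _ hw
    intro m hm
    exact (hm c hc).mp hu
  exact hW c hc w hwc

lemma ECl_inter_finite {L : List (Set ℕ × Set ℕ)} (h : NStar ≃ₜ NStar) {u v : ℕ}
    (huv : Cls L u ≠ Cls L v) : (ECl L h u ∩ ECl L h v).Finite := by
  rw [← st_eq_empty_iff, st_inter, st_ECl, st_ECl,
    ← Set.image_inter h.injective, ← st_inter, Cls_disjoint huv, st_empty, Set.image_empty]

/-- the set of representatives with infinite class -/
noncomputable def repsInf (L : List (Set ℕ × Set ℕ)) : Finset ℕ :=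
  @Finset.filter _ (fun r => (Cls L r).Infinite) (Classical.decPred _) (reps L)

lemma mem_repsInf {L : List (Set ℕ × Set ℕ)} {r : ℕ} :
    r ∈ repsInf L ↔ r ∈ reps L ∧ (Cls L r).Infinite := by
  unfold repsInf
  exact @Finset.mem_filter _ _ (Classical.decPred _) _ _

lemma repsInf_spec {L : List (Set ℕ × Set ℕ)} {u : ℕ} (hu : (Cls L u).Infinite) :
    ∃ r ∈ repsInf L, Cls L r = Cls L u := by
  obtain ⟨r, hr, hru⟩ := reps_spec L u
  exact ⟨r, mem_repsInf.mpr ⟨hr, hru ▸ hu⟩, hru⟩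

/-- the union of the codes of the infinite classes is cofinite (generic homeo) -/
lemma cover_inf (L : List (Set ℕ × Set ℕ)) (g : NStar ≃ₜ NStar) :
    ((⋃ r ∈ repsInf L, ECl L g r)ᶜ).Finite := by
  classical
  have huniv : (⋃ r ∈ reps L, Cls L r) = univ := by
    apply Set.eq_univ_of_forall
    intro m
    obtain ⟨r, hrm, hrc⟩ := reps_spec L m
    exact Set.mem_biUnion hrm (hrc ▸ mem_Cls_self L m)
  have hstu : st (⋃ r ∈ reps L, ECl L g r) = univ := by
    rw [st_biUnion]
    apply Set.eq_univ_of_forall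
    intro v
    have hv : g.symm v ∈ st (⋃ r ∈ reps L, Cls L r) := by rw [huniv, st_univ]; trivial
    rw [st_biUnion] at hv
    simp only [Set.mem_iUnion] at hv ⊢
    obtain ⟨r, hr, hmem⟩ := hv
    refine ⟨r, hr, ?_⟩
    have : v ∈ st (ECl L g r) := by
      rw [st_ECl]
      exact ⟨g.symm v, hmem, by simp⟩
    exact this
  have h1 : ((⋃ r ∈ reps L, ECl L g r)ᶜ).Finite := by
    apply st_eq_empty_iff.mp
    rw [st_compl, hstu]
    simp
  have h2 : (⋃ r ∈ (reps L \ repsInf L : Finset ℕ), ECl L g r).Finite := by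
    apply Set.Finite.biUnion (reps L \ repsInf L : Finset ℕ).finite_toSet
    intro r hr
    rw [Finset.mem_coe, Finset.mem_sdiff] at hr
    have hninf : ¬ (Cls L r).Infinite := fun hinf => hr.2 (mem_repsInf.mpr ⟨hr.1, hinf⟩)
    rw [Set.not_infinite] at hninf
    by_contra hcon
    exact absurd ((ECl_infinite_iff L g r).mp (fun hfin => hcon hfin)) (fun h' => hninf.not_infinite h')
  apply (h1.union h2).subset
  intro m hm
  simp only [Set.mem_compl_iff, Set.mem_iUnion] at hm
  by_cases hcase : m ∈ ⋃ r ∈ reps L, ECl L g r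
  · right
    simp only [Set.mem_iUnion] at hcase ⊢
    obtain ⟨r, hr, hmr⟩ := hcase
    refine ⟨r, ?_, hmr⟩
    rw [Finset.mem_sdiff]
    exact ⟨hr, fun hrI => hm ⟨r, hrI, hmr⟩⟩
  · left
    exact hcase

/-- the covering of cofinitely many naturals by infinite classes -/
lemma cls_cover_inf (L : List (Set ℕ × Set ℕ)) :
    ((⋃ r ∈ repsInf L, Cls L r)ᶜ).Finite := by
  classical
  have h2 : (⋃ r ∈ (reps L \ repsInf L : Finset ℕ), Cls L r).Finite := by
    apply Set.Finite.biUnion (reps L \ repsInf L : Finset ℕ).finite_toSet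
    intro r hr
    rw [Finset.mem_coe, Finset.mem_sdiff] at hr
    have hninf : ¬ (Cls L r).Infinite := fun hinf => hr.2 (mem_repsInf.mpr ⟨hr.1, hinf⟩)
    rwa [Set.not_infinite] at hninf
  apply h2.subset
  intro m hm
  simp only [Set.mem_compl_iff, Set.mem_iUnion] at hm
  obtain ⟨r, hr, hrc⟩ := reps_spec L m
  have hmr : m ∈ Cls L r := hrc ▸ mem_Cls_self L m
  simp only [Set.mem_iUnion]
  refine ⟨r, ?_, hmr⟩
  rw [Finset.mem_sdiff]
  refine ⟨hr, fun hrI => hm ⟨r, hrI, hmr⟩⟩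

/-- the set of naturals lying in a finite `L`-class is finite -/
lemma finite_cls_junk (L : List (Set ℕ × Set ℕ)) : {m | (Cls L m).Finite}.Finite := by
  apply (cls_cover_inf L).subset
  intro m hm
  simp only [Set.mem_compl_iff, Set.mem_iUnion]
  rintro ⟨r, hr, hmr⟩
  have := (mem_repsInf.mp hr).2
  rw [← Cls_eq_of_mem hmr] at this
  exact this hm

/-- junk set: elements of some `E`-set which are not legal successors -/
def Xjunk (L : List (Set ℕ × Set ℕ)) (h : NStar ≃ₜ NStar) : Set ℕ :=
  ⋃ r ∈ reps L, (ECl L h r \ Qs L r)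

lemma Xjunk_finite {L : List (Set ℕ × Set ℕ)} {h : NStar ≃ₜ NStar} (hW : h ∈ WL L) :
    (Xjunk L h).Finite :=
  Set.Finite.biUnion (reps L).finite_toSet fun r _ => ECl_ae_Qs hW r

lemma mem_Qs_of_ECl {L : List (Set ℕ × Set ℕ)} {h : NStar ≃ₜ NStar} {u m : ℕ}
    (hm : m ∈ ECl L h u) (hx : m ∉ Xjunk L h) : m ∈ Qs L u := by
  obtain ⟨r, hr, hrc⟩ := reps_spec L u
  have h1 : ECl L h u = ECl L h r := ECl_congr h hrc.symm
  have h2 : Qs L u = Qs L r := by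
    have : u ∈ Cls L r := hrc ▸ mem_Cls_self L u
    exact Qs_eq_of_mem this
  rw [h2]
  by_contra hq
  exact hx (Set.mem_biUnion hr ⟨h1 ▸ hm, hq⟩)

/-! ### the bad set -/

/-- the set of naturals with no abundant legal predecessor position or finite class -/
def Bad (L : List (Set ℕ × Set ℕ)) : Set ℕ :=
  {w | (Cls L w).Finite ∨ ∀ u, (Cls L u).Infinite → w ∉ Qs L u}

lemma bad_mono {L L' : List (Set ℕ × Set ℕ)} (hsub : ∀ c ∈ L, c ∈ L') :
    Bad L ⊆ Bad L' := by
  intro w hw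
  rcases hw with hfin | hall
  · exact Or.inl (hfin.subset (Cls_anti hsub w))
  · refine Or.inr fun u hu hq => ?_
    have hLu : (Cls L u).Infinite := hu.mono (Cls_anti hsub u)
    exact hall u hLu (Qs_anti hsub u hq)

lemma not_bad_nil (w : ℕ) : w ∉ Bad [] := by
  intro hw
  rcases hw with hfin | hall
  · have : Cls [] w = univ := by
      apply Set.eq_univ_of_forall; intro m c hc; exact absurd hc (by simp)
    rw [this] at hfin
    exact Set.infinite_univ hfin
  · have : Cls ([] : List (Set ℕ × Set ℕ)) 0 = univ := by
      apply Set.eq_univ_of_forall; intro m c hc; exact absurd hc (by simp)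
    exact hall 0 (this ▸ Set.infinite_univ) (fun c hc => absurd hc (by simp))

lemma bad_finite {L : List (Set ℕ × Set ℕ)} {h : NStar ≃ₜ NStar} (hW : h ∈ WL L) :
    (Bad L).Finite := by
  apply Set.Finite.subset (((finite_cls_junk L).union (cover_inf L h)).union (Xjunk_finite hW))
  intro w hw
  rcases hw with hfin | hall
  · exact Or.inl (Or.inl hfin)
  · by_cases hcov : w ∈ ⋃ r ∈ repsInf L, ECl L h r
    · right
      simp only [Set.mem_iUnion] at hcov
      obtain ⟨r, hr, hwr⟩ := hcov
      by_contra hX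
      exact hall r (mem_repsInf.mp hr).2 (mem_Qs_of_ECl hwr hX)
    · exact Or.inl (Or.inr hcov)

/-! ### connectivity via the shift -/

lemma sigma_image_st (C : Set ℕ) : ⇑sigmaShift '' st C = st ((· + 1) '' C) := by
  apply Set.Subset.antisymm
  · rintro _ ⟨u, hu, rfl⟩
    have : (· + 1) ⁻¹' ((· + 1) '' C) ∈ u.1 := by
      rw [Set.preimage_image_eq C (fun a b hab => by omega)]
      exact hu
    exact this
  · intro v hv
    refine ⟨sigmaShift.symm v, ?_, by simp⟩
    have hsub : ((· + 1) '' C) ⊆ (· - 1) ⁻¹' C := by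
      rintro _ ⟨k, hk, rfl⟩
      simpa using hk
    have hv' : ((· + 1) '' C) ∈ v.1 := hv
    show C ∈ (Ultrafilter.map (· - 1) v.1)
    rw [Ultrafilter.mem_map]
    exact Filter.mem_of_superset hv' hsub

/-- abundance transfer between the `E`-picture and the `σ`-codes -/
lemma abundance_transfer {L : List (Set ℕ × Set ℕ)} {h j : NStar ≃ₜ NStar}
    (hj : ∀ u, j (h u) = sigmaShift (j u)) (a b : ℕ) :
    (ECl L h a ∩ Cls L b).Infinite ↔ (((· + 1) '' ECl L j a) ∩ ECl L j b).Infinite := by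
  have him : ⇑j '' st (ECl L h a) = st ((· + 1) '' ECl L j a) := by
    rw [st_ECl, ← Set.image_comp]
    have : (⇑j ∘ ⇑h) = (⇑sigmaShift ∘ ⇑j) := funext hj
    rw [this, Set.image_comp, ← st_ECl L j a, sigma_image_st]
  rw [← st_nonempty_iff, ← st_nonempty_iff, st_inter, st_inter]
  constructor
  · rintro ⟨v, hv1, hv2⟩
    refine ⟨j v, ?_, ?_⟩
    · rw [← him]; exact ⟨v, hv1, rfl⟩
    · rw [st_ECl]; exact ⟨v, hv2, rfl⟩
  · rintro ⟨v, hv1, hv2⟩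
    rw [← him] at hv1
    rw [st_ECl] at hv2
    obtain ⟨v1, hv1', heq1⟩ := hv1
    obtain ⟨v2, hv2', heq2⟩ := hv2
    have : v1 = v2 := j.injective (heq1.trans heq2.symm)
    exact ⟨v1, hv1', this ▸ hv2'⟩

/-- one connectivity step relation -/
def Ab (L : List (Set ℕ × Set ℕ)) (h : NStar ≃ₜ NStar) (u v : ℕ) : Prop :=
  (ECl L h u ∩ Cls L v).Infinite ∧ (Cls L v).Infinite

lemma Ab_congr_left {L : List (Set ℕ × Set ℕ)} {h : NStar ≃ₜ NStar} {u u' v : ℕ}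
    (huu : Cls L u = Cls L u') (hab : Ab L h u v) : Ab L h u' v := by
  refine ⟨?_, hab.2⟩
  have := hab.1
  rwa [ECl_congr h huu] at this

lemma connect {L : List (Set ℕ × Set ℕ)} {h : NStar ≃ₜ NStar}
    (hIso : h ∈ IsoSigma) {a b : ℕ}
    (ha : (Cls L a).Infinite) (hb : (Cls L b).Infinite) :
    ∃ e, Cls L e = Cls L b ∧ Relation.ReflTransGen (Ab L h) a e := by
  classical
  obtain ⟨j, hj⟩ := hIso
  -- junk sets
  set D : Set ℕ := ⋃ r ∈ repsInf L, ⋃ r' ∈ repsInf L,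
    (if (((· + 1) '' ECl L j r) ∩ ECl L j r').Infinite then (∅ : Set ℕ)
     else ((· + 1) '' ECl L j r) ∩ ECl L j r') with hD
  have hDfin : D.Finite := by
    apply Set.Finite.biUnion (repsInf L).finite_toSet
    intro r _
    apply Set.Finite.biUnion (repsInf L).finite_toSet
    intro r' _
    split_ifs with hinf
    · exact Set.finite_empty
    · rwa [Set.not_infinite] at hinf
  set O : Set ℕ := ⋃ r ∈ repsInf L, ⋃ r' ∈ repsInf L,
    (if Cls L r = Cls L r' then (∅ : Set ℕ) else ECl L j r ∩ ECl L j r') with hO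
  have hOfin : O.Finite := by
    apply Set.Finite.biUnion (repsInf L).finite_toSet
    intro r _
    apply Set.Finite.biUnion (repsInf L).finite_toSet
    intro r' _
    split_ifs with hcls
    · exact Set.finite_empty
    · exact ECl_inter_finite j hcls
  have hCovfin := cover_inf L j
  obtain ⟨N, hN⟩ := ((hDfin.union hOfin).union hCovfin).bddAbove
  -- the word
  have hword : ∀ n, N < n → ∃ r ∈ repsInf L, n ∈ ECl L j r := by
    intro n hn
    by_contra hcon
    push_neg at hcon
    have : n ∈ (⋃ r ∈ repsInf L, ECl L j r)ᶜ := by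
      simp only [Set.mem_compl_iff, Set.mem_iUnion]
      rintro ⟨r, hr, hnr⟩
      exact absurd hnr (hcon r hr)
    exact absurd (hN (Or.inr this)) (by omega)
  set rfn : ℕ → ℕ := fun n => if hh : ∃ r ∈ repsInf L, n ∈ ECl L j r then hh.choose else 0
    with hrfn
  have hrfn_spec : ∀ n, N < n → rfn n ∈ repsInf L ∧ n ∈ ECl L j (rfn n) := by
    intro n hn
    have hh := hword n hn
    rw [hrfn]
    simp only [dif_pos hh]
    exact ⟨hh.choose_spec.1, hh.choose_spec.2⟩
  -- uniqueness of class
  have huniq : ∀ n, N < n → ∀ r ∈ repsInf L, n ∈ ECl L j r → Cls L r = Cls L (rfn n) := by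
    intro n hn r hr hnr
    by_contra hne
    have : n ∈ O := by
      apply Set.mem_biUnion hr
      apply Set.mem_biUnion (hrfn_spec n hn).1
      rw [if_neg hne]
      exact ⟨hnr, (hrfn_spec n hn).2⟩
    exact absurd (hN (Or.inl (Or.inr this))) (by omega)
  -- the step
  have hstep : ∀ n, N < n → Ab L h (rfn n) (rfn (n + 1)) := by
    intro n hn
    have h1 := hrfn_spec n hn
    have h2 := hrfn_spec (n + 1) (by omega)
    have hmem : (n + 1) ∈ ((· + 1) '' ECl L j (rfn n)) ∩ ECl L j (rfn (n + 1)) :=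
      ⟨⟨n, h1.2, rfl⟩, h2.2⟩
    have hinf : (((· + 1) '' ECl L j (rfn n)) ∩ ECl L j (rfn (n + 1))).Infinite := by
      by_contra hninf
      have : (n + 1) ∈ D := by
        apply Set.mem_biUnion h1.1
        apply Set.mem_biUnion h2.1
        rw [if_neg hninf]
        exact hmem
      exact absurd (hN (Or.inl (Or.inl this))) (by omega)
    exact ⟨(abundance_transfer hj _ _).mpr hinf, (mem_repsInf.mp h2.1).2⟩
  -- occurrences
  have hocc : ∀ r ∈ repsInf L, ∀ M, ∃ n, M < n ∧ N < n ∧ Cls L (rfn n) = Cls L r := by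
    intro r hr M
    have hinf : (ECl L j r).Infinite := (ECl_infinite_iff L j r).mpr (mem_repsInf.mp hr).2
    obtain ⟨n, hn1, hn2⟩ := hinf.exists_gt (max M N)
    refine ⟨n, by omega, by omega, (huniq n (by omega) r hr hn1).symm⟩
  -- representatives of a and b
  obtain ⟨ra, hra, hrac⟩ := repsInf_spec ha
  obtain ⟨rb, hrb, hrbc⟩ := repsInf_spec hb
  obtain ⟨n₁, -, hn₁N, hn₁c⟩ := hocc ra hra 0
  obtain ⟨n₂, hn₂1, hn₂N, hn₂c⟩ := hocc rb hrb n₁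
  -- path by induction
  have haux : ∀ k, Relation.ReflTransGen (Ab L h) a (rfn (n₁ + 1 + k)) := by
    intro k
    induction k with
    | zero =>
        apply Relation.ReflTransGen.single
        apply Ab_congr_left (u := rfn n₁)
        · rw [hn₁c, hrac]
        · exact hstep n₁ hn₁N
    | succ k ih =>
        have : n₁ + 1 + k + 1 = n₁ + 1 + (k + 1) := by omega
        exact this ▸ ih.tail (hstep (n₁ + 1 + k) (by omega))
  have hle : n₁ + 1 ≤ n₂ := by omega
  refine ⟨rfn n₂, by rw [hn₂c, hrbc], ?_⟩
  have : n₂ = n₁ + 1 + (n₂ - (n₁ + 1)) := by omega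
  rw [this]
  exact haux _

end S17
namespace S17

lemma pick {S F : Set ℕ} (hS : S.Infinite) (hF : F.Finite) : ∃ m, m ∈ S ∧ m ∉ F := by
  obtain ⟨m, hm⟩ := (hS.diff hF).nonempty
  exact ⟨m, hm.1, hm.2⟩

lemma pigeonhole {T : Set ℕ} (hT : T.Infinite) {t : Finset ℕ} {f : ℕ → Set ℕ}
    (hcov : ((⋃ r ∈ t, f r)ᶜ).Finite) : ∃ r ∈ t, (T ∩ f r).Infinite := by
  by_contra hcon
  push_neg at hcon
  have : T ⊆ (⋃ r ∈ t, f r)ᶜ ∪ ⋃ r ∈ t, (T ∩ f r) := by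
    intro m hm
    by_cases hmem : m ∈ ⋃ r ∈ t, f r
    · right
      simp only [Set.mem_iUnion] at hmem ⊢
      obtain ⟨r, hr, hmr⟩ := hmem
      exact ⟨r, hr, hm, hmr⟩
    · exact Or.inl hmem
  exact hT (Set.Finite.subset (hcov.union (Set.Finite.biUnion t.finite_toSet
    fun r hr => hcon r hr)) this)

lemma exists_inf_class (L : List (Set ℕ × Set ℕ)) : ∃ z, (Cls L z).Infinite := by
  by_contra hcon
  push_neg at hcon
  have h1 : {m | (Cls L m).Finite} = univ := Set.eq_univ_of_forall fun m => hcon m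
  have h2 := finite_cls_junk L
  rw [h1] at h2
  exact Set.infinite_univ h2

lemma chain_append_one {α : Type*} {R : α → α → Prop} :
    ∀ {l : List α} {a b : α}, List.Chain R a l → R ((a :: l).getLast (by simp)) b →
      List.Chain R a (l ++ [b])
  | [], a, b, _, hR => List.Chain.cons hR List.Chain.nil
  | c :: l', a, b, hch, hR => by
      rw [List.Chain, List.chain_cons] at hch
      have := chain_append_one hch.2 (by rwa [List.getLast_cons_cons] at hR)
      exact List.Chain.cons hch.1 this

lemma chain_max (CH : List (List (Set ℕ × Set ℕ)))
    (hch : ∀ M ∈ CH, ∀ M' ∈ CH, (∀ c ∈ M, c ∈ M') ∨ (∀ c ∈ M', c ∈ M))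
    (P : List (Set ℕ × Set ℕ) → Prop) (hex : ∃ M ∈ CH, P M) :
    ∃ Mx ∈ CH, P Mx ∧ ∀ M ∈ CH, P M → ∀ c ∈ M, c ∈ Mx := by
  induction CH with
  | nil => obtain ⟨M, hM, -⟩ := hex; exact absurd hM (by simp)
  | cons M₀ rest ih =>
      have hch' : ∀ M ∈ rest, ∀ M' ∈ rest, (∀ c ∈ M, c ∈ M') ∨ (∀ c ∈ M', c ∈ M) :=
        fun M hM M' hM' => hch M (List.mem_cons_of_mem _ hM) M' (List.mem_cons_of_mem _ hM')
      by_cases hexr : ∃ M ∈ rest, P M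
      · obtain ⟨Mr, hMr, hPMr, hmax⟩ := ih hch' hexr
        by_cases hPM₀ : P M₀
        · rcases hch M₀ List.mem_cons_self Mr (List.mem_cons_of_mem _ hMr) with hsub | hsub
          · refine ⟨Mr, List.mem_cons_of_mem _ hMr, hPMr, ?_⟩
            intro M hM hPM
            rcases List.mem_cons.mp hM with rfl | hM'
            · exact hsub
            · exact hmax M hM' hPM
          · refine ⟨M₀, List.mem_cons_self, hPM₀, ?_⟩
            intro M hM hPM
            rcases List.mem_cons.mp hM with rfl | hM'
            · exact fun c hc => hc
            · exact fun c hc => hsub c (hmax M hM' hPM c hc)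
        · refine ⟨Mr, List.mem_cons_of_mem _ hMr, hPMr, ?_⟩
          intro M hM hPM
          rcases List.mem_cons.mp hM with rfl | hM'
          · exact absurd hPM hPM₀
          · exact hmax M hM' hPM
      · obtain ⟨M, hM, hPM⟩ := hex
        rcases List.mem_cons.mp hM with rfl | hM'
        · refine ⟨M, List.mem_cons_self, hPM, ?_⟩
          intro M' hM' hPM'
          rcases List.mem_cons.mp hM' with rfl | hM''
          · exact fun c hc => hc
          · exact absurd ⟨M', hM'', hPM'⟩ hexr
        · exact absurd ⟨M, hM', hPM⟩ hexr

/-- the routing lemma: a legal chain from any point with infinite class into any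
infinite target set, avoiding a given finite set -/
lemma route_aux {L : List (Set ℕ × Set ℕ)} {h : NStar ≃ₜ NStar} (hW : h ∈ WL L) :
    ∀ (nodes : List ℕ) (a : ℕ) (F : Set ℕ), F.Finite → List.Chain (Ab L h) a nodes →
    ∃ l : List ℕ, l.Nodup ∧ (∀ m ∈ l, m ∉ F) ∧ List.Chain (Ok L) a l ∧
      Cls L ((a :: l).getLast (by simp)) = Cls L ((a :: nodes).getLast (by simp)) := by
  intro nodes
  induction nodes with
  | nil =>
      intro a F hF _
      exact ⟨[], List.nodup_nil, by simp, List.Chain.nil, rfl⟩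
  | cons b rest ih =>
      intro a F hF hchain
      rw [List.Chain, List.chain_cons] at hchain
      obtain ⟨hab, hrest⟩ := hchain
      have hSinf : (ECl L h a ∩ Cls L b).Infinite := hab.1
      obtain ⟨el, hel, helF⟩ := pick hSinf (hF.union (Xjunk_finite hW))
      have helQ : el ∈ Qs L a := mem_Qs_of_ECl hel.1 (fun hx => helF (Or.inr hx))
      have helC : Cls L el = Cls L b := Cls_eq_of_mem hel.2
      have hrest' : List.Chain (Ab L h) el rest := by
        cases rest with
        | nil => exact List.Chain.nil
        | cons c rest' =>
            rw [List.chain_cons] at hrest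
            exact List.Chain.cons (Ab_congr_left helC.symm hrest.1) hrest.2
      obtain ⟨l', hnd, hlF, hchain', hcls⟩ := ih el (F ∪ {el}) (hF.union (Set.finite_singleton el)) hrest'
      refine ⟨el :: l', ?_, ?_, List.Chain.cons helQ hchain', ?_⟩
      · exact List.nodup_cons.mpr ⟨fun hmem => hlF el hmem (Or.inr rfl), hnd⟩
      · intro m hm
        rcases List.mem_cons.mp hm with rfl | hm'
        · exact fun hmF => helF (Or.inl hmF)
        · exact fun hmF => hlF m hm' (Or.inl hmF)
      · rw [List.getLast_cons_cons, List.getLast_cons_cons, hcls]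
        cases rest with
        | nil => simpa using helC
        | cons c rest' => rw [List.getLast_cons_cons, List.getLast_cons_cons]

lemma route {L : List (Set ℕ × Set ℕ)} {h : NStar ≃ₜ NStar} (hW : h ∈ WL L)
    (hIso : h ∈ IsoSigma) {a : ℕ} (ha : (Cls L a).Infinite) {T : Set ℕ} (hT : T.Infinite)
    {F : Set ℕ} (hF : F.Finite) :
    ∃ (l : List ℕ) (hne : l ≠ []), l.Nodup ∧ (∀ m ∈ l, m ∉ F) ∧
      List.Chain (Ok L) a l ∧ l.getLast hne ∈ T := by
  obtain ⟨r, hr, hrT⟩ := pigeonhole hT (cover_inf L h)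
  obtain ⟨e, he, hrtg⟩ := connect hIso ha (mem_repsInf.mp hr).2
  obtain ⟨nodes, hchain, hlast⟩ := List.exists_isChain_cons_of_relationReflTransGen hrtg
  obtain ⟨l₀, hnd₀, hF₀, hch₀, hcls₀⟩ := route_aux hW nodes a F hF hchain
  rw [hlast] at hcls₀
  -- last class is the class of r
  have hlcls : Cls L ((a :: l₀).getLast (by simp)) = Cls L r := by
    rw [hcls₀, he]
  -- pick the final element in T
  have hl₀fin : {m | m ∈ l₀}.Finite := l₀.finite_toSet
  obtain ⟨eT, heT, heTF⟩ := pick hrT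
    ((hF.union (Xjunk_finite hW)).union (hl₀fin.union (Set.finite_singleton a)))
  have heTQ : Ok L ((a :: l₀).getLast (by simp)) eT := by
    apply mem_Qs_of_ECl (u := (a :: l₀).getLast (by simp))
    · rw [ECl_congr h hlcls]
      exact heT.2
    · exact fun hx => heTF (Or.inl (Or.inr hx))
  refine ⟨l₀ ++ [eT], by simp, ?_, ?_, chain_append_one hch₀ heTQ, ?_⟩
  · rw [List.nodup_append]
    exact ⟨hnd₀, List.nodup_singleton eT, by
      intro m hm b hm' hmb
      rw [← hmb] at hm'
      rw [List.mem_singleton] at hm'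
      subst hm'
      exact heTF (Or.inr (Or.inl hm))⟩
  · intro m hm
    rcases List.mem_append.mp hm with hm' | hm'
    · exact hF₀ m hm'
    · rw [List.mem_singleton] at hm'
      subst hm'
      exact fun hmF => heTF (Or.inl (Or.inl hmF))
  · rw [List.getLast_append_of_ne_nil (l := l₀) (l' := [eT]) _ (by simp)]
    exact heT.1

end S17
namespace S17

/-- One fusion stage: extend a finite chain legally, absorbing `w`, landing in an
infinite `L'`-class, with all new transitions legal at the appropriate levels. -/
lemma stage {L L' : List (Set ℕ × Set ℕ)} (hLL' : ∀ c ∈ L, c ∈ L')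
    (CH : List (List (Set ℕ × Set ℕ)))
    (hCHsub : ∀ M ∈ CH, ∀ c ∈ M, c ∈ L')
    (hCHchain : ∀ M ∈ CH, ∀ M' ∈ CH, (∀ c ∈ M, c ∈ M') ∨ (∀ c ∈ M', c ∈ M))
    {h : NStar ≃ₜ NStar} (hIso : h ∈ IsoSigma) (hW : h ∈ WL L')
    {p : List ℕ} (hp : p.Nodup) (hpne : p ≠ [])
    (hgood : (Cls L (p.getLast hpne)).Infinite) (w : ℕ) :
    ∃ (seg : List ℕ) (hne : seg ≠ []),
      (p ++ seg).Nodup ∧ w ∈ p ++ seg ∧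
      (Cls L' (seg.getLast hne)).Infinite ∧
      Ok L (p.getLast hpne) (seg.head hne) ∧
      List.Chain' (fun a b => ∀ M ∈ CH, w ∉ Bad M → Ok M a b) seg := by
  classical
  have hWL : h ∈ WL L := WL_mono hLL' hW
  set P : ℕ → ℕ → Prop := fun a b => ∀ M ∈ CH, w ∉ Bad M → Ok M a b with hP
  have hOkP : ∀ a b, Ok L' a b → P a b := fun a b hok M hM _ => Ok_anti (hCHsub M hM) hok
  -- pick z₁
  have hEinf : (ECl L h (p.getLast hpne)).Infinite := (ECl_infinite_iff L h _).mpr hgood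
  obtain ⟨z₁, hz₁E, hz₁F⟩ := pick hEinf
    ((((Xjunk_finite hWL).union (finite_cls_junk L')).union p.finite_toSet).union
      (Set.finite_singleton w))
  simp only [Set.mem_union, not_or, Set.mem_setOf_eq, Set.mem_singleton_iff] at hz₁F
  obtain ⟨⟨⟨hz₁X, hz₁J⟩, hz₁p⟩, hz₁w⟩ := hz₁F
  have hz₁Ok : Ok L (p.getLast hpne) z₁ := mem_Qs_of_ECl hz₁E hz₁X
  have hz₁good : (Cls L' z₁).Infinite := by
    by_contra hfin
    rw [Set.not_infinite] at hfin
    exact hz₁J hfin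
  by_cases hwp : w ∈ p
  · -- w already present
    refine ⟨[z₁], by simp, ?_, by simp [hwp], by simpa using hz₁good, by simpa using hz₁Ok, ?_⟩
    · rw [List.nodup_append]
      exact ⟨hp, List.nodup_singleton z₁, fun m hm b hm' hmb => by
        rw [← hmb] at hm'; rw [List.mem_singleton] at hm'; subst hm'; exact hz₁p hm⟩
    · exact List.isChain_singleton z₁
  · by_cases hex : ∃ M ∈ CH, w ∉ Bad M
    · -- insertion at the maximal clean level Mx
      obtain ⟨Mx, hMx, hwMx, hmax⟩ := chain_max CH hCHchain (fun M => w ∉ Bad M) hex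
      have hWMx : h ∈ WL Mx := WL_mono (hCHsub Mx hMx) hW
      have hwMx' : ¬ ((Cls Mx w).Finite ∨ ∀ u, (Cls Mx u).Infinite → w ∉ Qs Mx u) := hwMx
      push_neg at hwMx'
      obtain ⟨hwCfin, u₀, hu₀inf, hwQ⟩ := hwMx'
      have hwCinf : (Cls Mx w).Infinite := hwCfin
      -- route from z₁ to the class of u₀
      obtain ⟨l₁, hne₁, hnd₁, hF₁, hch₁, huuT⟩ := route hW hIso hz₁good hu₀inf
        (F := ({m | m ∈ p} ∪ {w, z₁}))
        (p.finite_toSet.union ((Set.finite_singleton z₁).insert w))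
      have hl₁p : ∀ m ∈ l₁, m ∉ p := fun m hm hmp => hF₁ m hm (Or.inl hmp)
      have hl₁w : ∀ m ∈ l₁, m ≠ w := fun m hm hmw => hF₁ m hm (Or.inr (Or.inl hmw))
      have hl₁z : ∀ m ∈ l₁, m ≠ z₁ := fun m hm hmz => hF₁ m hm (Or.inr (Or.inr hmz))
      have hOkuuw : Ok Mx (l₁.getLast hne₁) w := by
        have heq : Qs Mx (l₁.getLast hne₁) = Qs Mx u₀ := Qs_eq_of_mem huuT
        show w ∈ Qs Mx (l₁.getLast hne₁)
        rw [heq]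
        exact hwQ
      -- pick v₂
      have hEwinf : (ECl Mx h w).Infinite := (ECl_infinite_iff Mx h w).mpr hwCinf
      obtain ⟨v₂, hv₂E, hv₂F⟩ := pick hEwinf
        ((((Xjunk_finite hWMx).union (finite_cls_junk L')).union p.finite_toSet).union
          ((l₁.finite_toSet).union ((Set.finite_singleton z₁).insert w)))
      simp only [Set.mem_union, not_or, Set.mem_setOf_eq, Set.mem_insert_iff,
        Set.mem_singleton_iff] at hv₂F
      obtain ⟨⟨⟨hv₂X, hv₂J⟩, hv₂p⟩, hv₂l, hv₂w, hv₂z⟩ := hv₂F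
      have hOkwv : Ok Mx w v₂ := mem_Qs_of_ECl hv₂E hv₂X
      have hv₂good : (Cls L' v₂).Infinite := by
        by_contra hfin
        rw [Set.not_infinite] at hfin
        exact hv₂J hfin
      have hlast : (z₁ :: (l₁ ++ [w, v₂])).getLast (by simp) = v₂ := by
        rw [List.getLast_cons (by simp : l₁ ++ [w, v₂] ≠ []),
          List.getLast_append_of_ne_nil (l := l₁) (l' := [w, v₂]) _ (by simp)]
        simp
      refine ⟨z₁ :: (l₁ ++ [w, v₂]), by simp, ?_, by simp, ?_, by simpa using hz₁Ok, ?_⟩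
      · -- Nodup
        rw [List.nodup_append]
        refine ⟨hp, ?_, ?_⟩
        · rw [List.nodup_cons]
          constructor
          · intro hmem
            rcases List.mem_append.mp hmem with hm | hm
            · exact hl₁z z₁ hm rfl
            · rcases List.mem_cons.mp hm with h' | h'
              · exact hz₁w h'
              · rw [List.mem_singleton] at h'
                exact hv₂z h'.symm
          · rw [List.nodup_append]
            refine ⟨hnd₁, ?_, ?_⟩
            · refine List.nodup_cons.mpr ⟨?_, List.nodup_singleton v₂⟩
              rw [List.mem_singleton]
              exact fun h' => hv₂w h'.symm
            · intro m hm b hm' hmb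
              rw [← hmb] at hm'
              rcases List.mem_cons.mp hm' with rfl | h'
              · exact hl₁w m hm rfl
              · rw [List.mem_singleton] at h'
                subst h'
                exact hv₂l hm
        · intro m hm b hm' hmb
          rw [← hmb] at hm'
          rcases List.mem_cons.mp hm' with rfl | h'
          · exact hz₁p hm
          rcases List.mem_append.mp h' with h'' | h''
          · exact hl₁p m h'' hm
          rcases List.mem_cons.mp h'' with rfl | h''
          · exact hwp hm
          · rw [List.mem_singleton] at h''
            subst h''
            exact hv₂p hm
      · -- last infinite class
        rw [hlast]
        exact hv₂good
      · -- the chain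
        show List.Chain P z₁ (l₁ ++ [w, v₂])
        have c1 : List.Chain P z₁ l₁ := List.IsChain.imp hOkP hch₁
        have hPuuw : P ((z₁ :: l₁).getLast (by simp)) w := by
          rw [List.getLast_cons hne₁]
          intro M hM hnb
          exact Ok_anti (hmax M hM hnb) hOkuuw
        have c2 : List.Chain P z₁ (l₁ ++ [w]) := chain_append_one c1 hPuuw
        have hPwv : P ((z₁ :: (l₁ ++ [w])).getLast (by simp)) v₂ := by
          have : (z₁ :: (l₁ ++ [w])).getLast (by simp) = w := by
            rw [List.getLast_cons (by simp : l₁ ++ [w] ≠ []),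
              List.getLast_append_of_ne_nil (l := l₁) (l' := [w]) _ (by simp)]
            simp
          rw [this]
          intro M hM hnb
          exact Ok_anti (hmax M hM hnb) hOkwv
        have c3 : List.Chain P z₁ ((l₁ ++ [w]) ++ [v₂]) := chain_append_one c2 hPwv
        have : (l₁ ++ [w]) ++ [v₂] = l₁ ++ [w, v₂] := by simp
        rwa [this] at c3
    · -- no clean level: transitions out of / into w are unconstrained
      have hPany : ∀ a b, P a b := by
        intro a b M hM hnb
        exact absurd ⟨M, hM, hnb⟩ hex
      obtain ⟨v₂, hv₂, hv₂F⟩ := pick ((finite_cls_junk L').infinite_compl)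
        ((p.finite_toSet.union (Set.toFinite {w, z₁})))
      simp only [Set.mem_union, not_or, Set.mem_insert_iff, Set.mem_singleton_iff,
        Set.mem_setOf_eq] at hv₂F
      obtain ⟨hv₂p, hv₂w, hv₂z⟩ := hv₂F
      have hv₂good : (Cls L' v₂).Infinite := by
        by_contra hfin
        rw [Set.not_infinite] at hfin
        exact hv₂ hfin
      refine ⟨[z₁, w, v₂], by simp, ?_, by simp, by simpa using hv₂good,
        by simpa using hz₁Ok, ?_⟩
      · rw [List.nodup_append]
        refine ⟨hp, ?_, ?_⟩
        · refine List.nodup_cons.mpr ⟨?_, List.nodup_cons.mpr ⟨?_, List.nodup_singleton v₂⟩⟩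
          · intro hmem
            rcases List.mem_cons.mp hmem with h' | h'
            · exact hz₁w h'
            · rw [List.mem_singleton] at h'
              exact hv₂z h'.symm
          · rw [List.mem_singleton]
            exact fun h' => hv₂w h'.symm
        · intro m hm b hm' hmb
          rw [← hmb] at hm'
          rcases List.mem_cons.mp hm' with rfl | hm''
          · exact hz₁p hm
          rcases List.mem_cons.mp hm'' with rfl | hm'''
          · exact hwp hm
          · rw [List.mem_singleton] at hm'''
            subst hm'''
            exact hv₂p hm
      · exact List.Chain.cons (hPany z₁ w) (List.Chain.cons (hPany w v₂) List.Chain.nil)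

end S17
namespace S17

/-- least natural not occurring in `p` -/
def wmiss (p : List ℕ) : ℕ := sInf {m | m ∉ p}

lemma wmiss_not_mem (p : List ℕ) : wmiss p ∉ p := by
  have hinf : {m | m ∉ p}.Infinite := by
    have := p.finite_toSet.infinite_compl
    convert this using 1
    exact rfl
  exact Nat.sInf_mem hinf.nonempty

lemma wmiss_min {p : List ℕ} {m : ℕ} (h : m < wmiss p) : m ∈ p := by
  by_contra hm
  have := Nat.sInf_le (show m ∈ {m | m ∉ p} from hm)
  rw [wmiss] at h
  omega

lemma exists_stage_idx {ℓ : ℕ → ℕ} (h0 : ℓ 0 = 1) (hmono : ∀ n, ℓ n < ℓ (n + 1))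
    (j : ℕ) (hj : 1 ≤ j) : ∃ k, ℓ k ≤ j ∧ j < ℓ (k + 1) := by
  have hge : ∀ m, m + 1 ≤ ℓ m := by
    intro m
    induction m with
    | zero => omega
    | succ m ih => have := hmono m; omega
  have hP0 : ℓ 0 ≤ j := by omega
  set k := Nat.findGreatest (fun k => ℓ k ≤ j) j with hk
  have hspec : ℓ k ≤ j := by
    exact Nat.findGreatest_spec (P := fun k => ℓ k ≤ j) (n := j) (Nat.zero_le j) hP0
  refine ⟨k, hspec, ?_⟩
  by_cases hcase : k + 1 ≤ j
  · have := Nat.findGreatest_is_greatest (show k < k + 1 by omega) hcase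
    omega
  · have := hge (k + 1)
    omega

end S17

/-- If `{U_n : n ∈ ω}` is a countable family of dense open subsets of the subspace
`Iso(σ)` of `H(ω*)`, then the set of trivial maps belonging to `⋂ n, U n` is dense
in `Iso(σ)`. -/
theorem stmt_17 (U : ℕ → Set ↥IsoSigma)
    (hU : ∀ n, IsOpen (U n) ∧ Dense (U n)) :
    Dense {h : ↥IsoSigma | (∀ n, h ∈ U n) ∧ IsTrivialHomeo h.1} := by
  classical
  rw [dense_iff_inter_open]
  intro O hO hOne
  obtain ⟨h₀, hh₀⟩ := hOne
  obtain ⟨L₀, hL₀mem, hL₀sub⟩ := S17.exists_WL_nbhd' hO hh₀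
  -- recursion 1 : conditions and witnesses
  have step1 : ∀ (n : ℕ) (q : {q : List (Set ℕ × Set ℕ) × ↥IsoSigma // q.2.1 ∈ S17.WL q.1}),
      ∃ q' : {q : List (Set ℕ × Set ℕ) × ↥IsoSigma // q.2.1 ∈ S17.WL q.1},
        (∀ c ∈ q.1.1, c ∈ q'.1.1) ∧ (∀ g : ↥IsoSigma, g.1 ∈ S17.WL q'.1.1 → g ∈ U n) := by
    rintro n ⟨⟨L, H⟩, hWH⟩
    have hOn : IsOpen {g : ↥IsoSigma | g.1 ∈ S17.WL L} :=
      (S17.isOpen_WL L).preimage continuous_subtype_val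
    obtain ⟨g, hgU, hgOn⟩ := (hU n).2.exists_mem_open hOn ⟨H, hWH⟩
    obtain ⟨M, hgM, hMsub⟩ := S17.exists_WL_nbhd' ((hU n).1.inter hOn) ⟨hgU, hgOn⟩
    refine ⟨⟨(L ++ M, g), ?_⟩, ?_, ?_⟩
    · rw [S17.WL_append]; exact ⟨hgOn, hgM⟩
    · intro c hc; exact List.mem_append.mpr (Or.inl hc)
    · intro g' hg'
      rw [S17.WL_append] at hg'
      exact (hMsub g' hg'.2).1
  choose step1f hstep1a hstep1b using step1
  let seq1 : ℕ → {q : List (Set ℕ × Set ℕ) × ↥IsoSigma // q.2.1 ∈ S17.WL q.1} :=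
    fun n => Nat.rec ⟨(L₀, h₀), hL₀mem⟩ (fun k s => step1f k s) n
  let L : ℕ → List (Set ℕ × Set ℕ) := fun n => (seq1 n).1.1
  let H : ℕ → ↥IsoSigma := fun n => (seq1 n).1.2
  have hLW : ∀ n, (H n).1 ∈ S17.WL (L n) := fun n => (seq1 n).2
  have hLs : ∀ n, ∀ c ∈ L n, c ∈ L (n + 1) := fun n => hstep1a n (seq1 n)
  have hLU : ∀ n, ∀ g : ↥IsoSigma, g.1 ∈ S17.WL (L (n + 1)) → g ∈ U n :=
    fun n => hstep1b n (seq1 n)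
  have hmono : ∀ n m, n ≤ m → ∀ c ∈ L n, c ∈ L m := by
    intro n m hnm
    induction hnm with
    | refl => exact fun c hc => hc
    | step h ih => exact fun c hc => hLs _ c (ih c hc)
  -- recursion 2 : the spine
  obtain ⟨z₀, hz₀⟩ := S17.exists_inf_class (L 0)
  have step2 : ∀ (n : ℕ)
      (p : {p : List ℕ // p.Nodup ∧ ∃ hne : p ≠ [], (S17.Cls (L n) (p.getLast hne)).Infinite}),
      ∃ p' : {p : List ℕ //
          p.Nodup ∧ ∃ hne : p ≠ [], (S17.Cls (L (n + 1)) (p.getLast hne)).Infinite},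
        ∃ seg : List ℕ, ∃ hs : seg ≠ [], p'.1 = p.1 ++ seg ∧ S17.wmiss p.1 ∈ p'.1 ∧
          (∀ hne : p.1 ≠ [], S17.Ok (L n) (p.1.getLast hne) (seg.head hs)) ∧
          List.Chain' (fun a b => ∀ k ≤ n + 1,
            S17.wmiss p.1 ∉ S17.Bad (L k) → S17.Ok (L k) a b) seg := by
    rintro n ⟨p, hnd, hne, hgood⟩
    have hCHsub : ∀ M ∈ (List.range (n + 2)).map L, ∀ c ∈ M, c ∈ L (n + 1) := by
      intro M hM
      obtain ⟨k, hk, rfl⟩ := List.mem_map.mp hM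
      exact hmono k (n + 1) (by rw [List.mem_range] at hk; omega)
    have hCHchain : ∀ M ∈ (List.range (n + 2)).map L, ∀ M' ∈ (List.range (n + 2)).map L,
        (∀ c ∈ M, c ∈ M') ∨ (∀ c ∈ M', c ∈ M) := by
      intro M hM M' hM'
      obtain ⟨k, hk, rfl⟩ := List.mem_map.mp hM
      obtain ⟨k', hk', rfl⟩ := List.mem_map.mp hM'
      rcases le_total k k' with h | h
      · exact Or.inl (hmono k k' h)
      · exact Or.inr (hmono k' k h)
    obtain ⟨seg, hsne, hndq, hwm, hlastinf, hjunc, hchain⟩ :=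
      S17.stage (hLs n) ((List.range (n + 2)).map L) hCHsub hCHchain (H (n + 1)).2
        (hLW (n + 1)) hnd hne hgood (S17.wmiss p)
    refine ⟨⟨p ++ seg, hndq, ⟨by simp [hsne], ?_⟩⟩, seg, hsne, rfl, hwm, ?_, ?_⟩
    · rw [List.getLast_append_of_ne_nil (l := p) (l' := seg) _ hsne]
      exact hlastinf
    · intro hne'
      exact hjunc
    · apply hchain.imp
      intro a b hab k hk hbad
      exact hab (L k) (List.mem_map.mpr ⟨k, List.mem_range.mpr (by omega), rfl⟩) hbad
  choose step2f hstep2 using step2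
  let seq2 : ∀ n : ℕ,
      {p : List ℕ // p.Nodup ∧ ∃ hne : p ≠ [], (S17.Cls (L n) (p.getLast hne)).Infinite} :=
    fun n => Nat.rec ⟨[z₀], List.nodup_singleton z₀, ⟨by simp, by simpa using hz₀⟩⟩
      (fun k s => step2f k s) n
  let P : ℕ → List ℕ := fun n => (seq2 n).1
  have key : ∀ n, ∃ seg : List ℕ, ∃ hs : seg ≠ [], P (n + 1) = P n ++ seg ∧
      S17.wmiss (P n) ∈ P (n + 1) ∧
      (∀ hne : P n ≠ [], S17.Ok (L n) ((P n).getLast hne) (seg.head hs)) ∧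
      List.Chain' (fun a b => ∀ k ≤ n + 1,
        S17.wmiss (P n) ∉ S17.Bad (L k) → S17.Ok (L k) a b) seg :=
    fun n => hstep2 n (seq2 n)
  choose seg hsegne hPsucc hwmem hjunc hchain using key
  have hPnd : ∀ n, (P n).Nodup := fun n => (seq2 n).2.1
  have hPne : ∀ n, P n ≠ [] := fun n => (seq2 n).2.2.choose
  have hlen0 : (P 0).length = 1 := rfl
  have hlenmono : ∀ n, (P n).length < (P (n + 1)).length := by
    intro n
    rw [hPsucc n, List.length_append]
    have := List.length_pos_iff.mpr (hsegne n)
    omega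
  have hlenge : ∀ n, n + 1 ≤ (P n).length := by
    intro n
    induction n with
    | zero => omega
    | succ n ih => have := hlenmono n; omega
  have hprefix : ∀ n m, n ≤ m → P n <+: P m := by
    intro n m hnm
    induction hnm with
    | refl => exact List.prefix_refl _
    | @step m' h ih =>
        refine ih.trans ?_
        rw [hPsucc m']
        exact List.prefix_append _ _
  -- the spine as a function
  let x : ℕ → ℕ := fun i => (P (i + 1)).getD i 0
  have hx : ∀ n i, (h : i < (P n).length) → (P n)[i] = x i := by
    intro n i h
    have hi1 : i < (P (i + 1)).length := by have := hlenge (i + 1); omega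
    show (P n)[i] = (P (i + 1)).getD i 0
    rw [List.getD_eq_getElem _ _ hi1]
    rcases le_total n (i + 1) with hc | hc
    · exact (hprefix n (i + 1) hc).getElem h
    · exact ((hprefix (i + 1) n hc).getElem hi1).symm
  have hxinj : Function.Injective x := by
    intro i j hij
    by_contra hneij
    have hi : i < (P (max i j + 1)).length := by
      have := hlenge (max i j + 1); omega
    have hj : j < (P (max i j + 1)).length := by
      have := hlenge (max i j + 1); omega
    rw [← hx (max i j + 1) i hi, ← hx (max i j + 1) j hj] at hij
    have := List.nodup_iff_injective_get.mp (hPnd (max i j + 1))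
      (a₁ := ⟨i, hi⟩) (a₂ := ⟨j, hj⟩) (by simpa using hij)
    simp at this
    exact hneij this
  have hwmono : ∀ n, S17.wmiss (P n) < S17.wmiss (P (n + 1)) := by
    intro n
    have h1 : S17.wmiss (P n) ∈ P (n + 1) := hwmem n
    have h2 : S17.wmiss (P (n + 1)) ∉ P (n + 1) := S17.wmiss_not_mem _
    have h3 : S17.wmiss (P n) ≤ S17.wmiss (P (n + 1)) := by
      apply Nat.sInf_le
      show S17.wmiss (P (n + 1)) ∉ P n
      intro hmem
      exact h2 ((hprefix n (n + 1) (by omega)).subset hmem)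
    have h4 : S17.wmiss (P n) ≠ S17.wmiss (P (n + 1)) := fun he => h2 (he ▸ h1)
    omega
  have hwge : ∀ n, n ≤ S17.wmiss (P n) := by
    intro n
    induction n with
    | zero => omega
    | succ n ih => have := hwmono n; omega
  have hmem_all : ∀ m, m ∈ P (m + 1) := by
    intro m
    by_contra hm
    have h1 : S17.wmiss (P (m + 1)) ≤ m := Nat.sInf_le hm
    have := hwge (m + 1)
    omega
  have hxsurj : ∀ m, ∃ i, x i = m := by
    intro m
    obtain ⟨i, hi, hval⟩ := List.mem_iff_getElem.mp (hmem_all m)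
    exact ⟨i, by rw [← hx (m + 1) i hi]; exact hval⟩
  have hxrange : (Set.range x)ᶜ.Finite := by
    have : (Set.range x)ᶜ = ∅ := by
      rw [Set.eq_empty_iff_forall_notMem]
      intro m hm
      exact hm (hxsurj m)
    rw [this]
    exact Set.finite_empty
  -- finiteness of violations
  have htrans : ∀ N, ∀ c ∈ L N, {i : ℕ | x i ∈ c.1 ∧ x (i + 1) ∉ c.2}.Finite := by
    intro N c hc
    have hbadfin : (S17.Bad (L N)).Finite := S17.bad_finite (hLW N)
    have hwsm : StrictMono (fun k => S17.wmiss (P k)) := strictMono_nat_of_lt_succ hwmono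
    have hbadstages : {k : ℕ | S17.wmiss (P k) ∈ S17.Bad (L N)}.Finite :=
      Set.Finite.preimage (hwsm.injective.injOn) hbadfin
    obtain ⟨K₀, hK₀⟩ := hbadstages.bddAbove
    apply Set.Finite.subset (Set.finite_Iio ((P (max (N + 1) (K₀ + 1))).length))
    intro i hi
    simp only [Set.mem_setOf_eq] at hi
    rw [Set.mem_Iio]
    by_contra hbig
    push_neg at hbig
    obtain ⟨k, hk1, hk2⟩ := S17.exists_stage_idx (ℓ := fun n => (P n).length) hlen0 hlenmono
      (i + 1) (by omega)
    have hlenmono' : ∀ a b, a ≤ b → (P a).length ≤ (P b).length :=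
      fun a b hab => (hprefix a b hab).length_le
    have hkK : max (N + 1) (K₀ + 1) ≤ k := by
      by_contra hkK
      push_neg at hkK
      have := hlenmono' (k + 1) (max (N + 1) (K₀ + 1)) (by omega)
      omega
    have hkN : N ≤ k := by omega
    have hcLk : c ∈ L k := hmono N k hkN c hc
    have hwk : S17.wmiss (P k) ∉ S17.Bad (L N) := by
      intro hmem
      have : k ≤ K₀ := hK₀ hmem
      omega
    have hiP : i + 1 < (P (k + 1)).length := hk2
    rcases Nat.lt_or_ge i ((P k).length) with hcase | hcase
    · -- junction transition
      have hieq : i + 1 = (P k).length := by omega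
      have h1 : x i = (P k).getLast (hPne k) := by
        rw [← hx k i (by omega), List.getLast_eq_getElem]
        congr 1
        omega
      have h2 : x (i + 1) = (seg k).head (hsegne k) := by
        rw [← hx (k + 1) (i + 1) hiP]
        have heq : (P (k + 1))[i + 1]'hiP
            = (P k ++ seg k)[i + 1]'(by rw [← hPsucc k]; exact hiP) := by
          congr 1
          exact hPsucc k
        rw [heq, List.getElem_append_right (by omega)]
        have h0 : i + 1 - (P k).length = 0 := by omega
        simp only [h0]
        rw [List.getElem_zero]
      have hOk := hjunc k (hPne k)
      rw [← h1, ← h2] at hOk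
      exact hi.2 (hOk c hcLk hi.1)
    · -- interior transition
      have hsle : (P (k + 1)).length = (P k).length + (seg k).length := by
        rw [hPsucc k, List.length_append]
      have hd1 : i - (P k).length + 1 < (seg k).length := by omega
      have hxi : x i = (seg k).get ⟨i - (P k).length, by omega⟩ := by
        rw [← hx (k + 1) i (by omega)]
        have heq : (P (k + 1))[i]'(by omega)
            = (P k ++ seg k)[i]'(by rw [← hPsucc k]; omega) := by
          congr 1
          exact hPsucc k
        rw [heq, List.getElem_append_right hcase]
        simp [List.get_eq_getElem]
      have hxi1 : x (i + 1) = (seg k).get ⟨i - (P k).length + 1, hd1⟩ := by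
        rw [← hx (k + 1) (i + 1) hiP]
        have heq : (P (k + 1))[i + 1]'hiP
            = (P k ++ seg k)[i + 1]'(by rw [← hPsucc k]; exact hiP) := by
          congr 1
          exact hPsucc k
        rw [heq, List.getElem_append_right (by omega)]
        have h0 : i + 1 - (P k).length = i - (P k).length + 1 := by omega
        simp only [List.get_eq_getElem, h0]
      have hstepP := (List.isChain_iff_getElem.mp (hchain k)) (i - (P k).length) (by omega)
      simp only [List.get_eq_getElem] at hxi hxi1
      rw [← hxi, ← hxi1] at hstepP
      have hOkN := hstepP N (by omega) hwk
      exact hi.2 (hOkN c hc hi.1)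
  -- the trivial map
  have htW : ∀ N, S17.spineHomeo x hxinj hxrange ∈ S17.WL (L N) := by
    intro N c hc
    have hfin : (c.1 \ (S17.spineF x) ⁻¹' c.2).Finite := by
      apply ((htrans N c hc).image x).subset
      rintro a ⟨ha1, ha2⟩
      obtain ⟨i, rfl⟩ := hxsurj a
      refine ⟨i, ⟨ha1, ?_⟩, rfl⟩
      intro hmem
      apply ha2
      show S17.spineF x (x i) ∈ c.2
      rw [S17.spineF_eq hxinj]
      exact hmem
    exact S17.mfpHomeo_mem_Vp hfin
  have htIso : S17.spineHomeo x hxinj hxrange ∈ IsoSigma := S17.spineHomeo_mem_iso hxinj hxrange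
  refine ⟨⟨S17.spineHomeo x hxinj hxrange, htIso⟩, ?_, ?_, ?_⟩
  · exact hL₀sub _ (htW 0)
  · intro n
    exact hLU n _ (htW (n + 1))
  · exact S17.spineHomeo_trivial hxinj hxrange
end
end
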